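/- arXiv:2111.11908 — 9 statements merged into one kernel-verified Lean document; each statement's English description precedes it below -/
import Mathlib

section
/- Let A be a finite abelian p-group and x ∈ A a nontrivial element. Then x splits from A if and only if there is no y ∈ A such that the order of x·yᵖ is strictly smaller than the order of x. -/
open Subgroup

universe u

/-- Pull back a complement of the image of `x` along a quotient map whose kernel meets
`⟨x⟩` trivially. -/
lemma pullback_complement {A : Type u} [CommGroup A] (N : Subgroup A) (x : A)
    (hN : Subgroup.zpowers x ⊓ N = ⊥) (H' : Subgroup (A ⧸ N))
    (h1 : Subgroup.zpowers (QuotientGroup.mk' N x) ⊓ H' = ⊥)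
    (h2 : Subgroup.zpowers (QuotientGroup.mk' N x) ⊔ H' = ⊤) :
    ∃ H : Subgroup A, Subgroup.zpowers x ⊓ H = ⊥ ∧ Subgroup.zpowers x ⊔ H = ⊤ := by
  set π := QuotientGroup.mk' N
  refine ⟨H'.comap π, ?_, ?_⟩
  · rw [eq_bot_iff]
    rintro z ⟨hz1, hz2⟩
    obtain ⟨m, rfl⟩ := hz1
    have hmem : π x ^ m ∈ Subgroup.zpowers (π x) ⊓ H' := ⟨⟨m, rfl⟩, by simpa using hz2⟩
    rw [h1, Subgroup.mem_bot] at hmem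
    have : x ^ m ∈ N := by
      rwa [← map_zpow, QuotientGroup.mk'_apply, QuotientGroup.eq_one_iff] at hmem
    have : x ^ m ∈ Subgroup.zpowers x ⊓ N := ⟨zpow_mem (Subgroup.mem_zpowers x) m, this⟩
    rw [hN, Subgroup.mem_bot] at this
    simp [this]
  · have hker : N ≤ H'.comap π := by
      intro z hz
      simp only [Subgroup.mem_comap]
      have : π z = 1 := by
        rw [QuotientGroup.mk'_apply, QuotientGroup.eq_one_iff]; exact hz
      rw [this]; exact one_mem _
    have hmap : (Subgroup.zpowers x ⊔ H'.comap π).map π = ⊤ := by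
      rw [Subgroup.map_sup, MonoidHom.map_zpowers,
        Subgroup.map_comap_eq_self_of_surjective (QuotientGroup.mk'_surjective N), h2]
    have := congrArg (Subgroup.comap π) hmap
    rwa [Subgroup.comap_map_eq, QuotientGroup.ker_mk', Subgroup.comap_top,
      sup_eq_left.mpr (le_trans hker le_sup_right)] at this

/-- In a finite abelian `p`-group, an element whose order annihilates the whole group
generates a direct factor. -/
lemma split_of_max_order (p : ℕ) [hp : Fact p.Prime] :
    ∀ (n : ℕ) (A : Type u) [CommGroup A] [Finite A], Nat.card A ≤ n →
    IsPGroup p A → ∀ x : A, (∀ a : A, a ^ orderOf x = 1) →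
    ∃ H : Subgroup A, Subgroup.zpowers x ⊓ H = ⊥ ∧ Subgroup.zpowers x ⊔ H = ⊤ := by
  intro n
  induction n with
  | zero =>
    intro A _ _ hcard _ x _
    have : 0 < Nat.card A := Nat.card_pos
    omega
  | succ n ih =>
    intro A _ _ hcard hA x hq
    by_cases htop : Subgroup.zpowers x = ⊤
    · exact ⟨⊥, by simp, by simp [htop]⟩
    -- find g₀ outside ⟨x⟩
    obtain ⟨g₀, hg₀⟩ : ∃ g, g ∉ Subgroup.zpowers x := by
      by_contra hcon
      push_neg at hcon
      exact htop ((Subgroup.eq_top_iff' _).mpr hcon)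
    -- x ≠ 1
    obtain ⟨k, hk⟩ := IsPGroup.iff_orderOf.mp hA x
    have hk0 : k ≠ 0 := by
      rintro rfl
      apply htop
      rw [Subgroup.eq_top_iff']
      intro a
      have := hq a
      rw [hk, pow_zero, pow_one] at this
      rw [this]
      exact one_mem _
    -- find g outside ⟨x⟩ with g^p ∈ ⟨x⟩
    obtain ⟨c, hc⟩ := hA g₀
    classical
    have hex : ∃ m : ℕ, g₀ ^ p ^ m ∈ Subgroup.zpowers x := ⟨c, by rw [hc]; exact one_mem _⟩
    set M := Nat.find hex with hM
    have hM0 : M ≠ 0 := by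
      intro h0
      have := Nat.find_spec hex
      rw [← hM, h0, pow_zero, pow_one] at this
      exact hg₀ this
    set g := g₀ ^ p ^ (M - 1) with hg
    have hgnot : g ∉ Subgroup.zpowers x :=
      Nat.find_min hex (Nat.sub_lt (Nat.pos_of_ne_zero hM0) one_pos)
    have hgp : g ^ p ∈ Subgroup.zpowers x := by
      have h1 : g ^ p = g₀ ^ p ^ M := by
        rw [hg, ← pow_mul, ← pow_succ, Nat.sub_add_cancel (Nat.one_le_iff_ne_zero.mpr hM0)]
      rw [h1]
      exact Nat.find_spec hex
    obtain ⟨a, ha⟩ := Subgroup.mem_zpowers_iff.mp hgp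
    -- p ∣ a
    have hexp : p * p ^ (k - 1) = p ^ k := by
      rw [← pow_succ']
      congr 1
      omega
    have hgq : (g ^ p) ^ p ^ (k - 1) = 1 := by
      rw [← pow_mul, hexp, ← hk]
      exact hq g
    have h1 : x ^ (a * ((p ^ (k - 1) : ℕ) : ℤ)) = 1 := by
      rw [zpow_mul, ha, zpow_natCast, hgq]
    have hdvd : ((p ^ k : ℕ) : ℤ) ∣ a * ((p ^ (k - 1) : ℕ) : ℤ) := by
      have h2 := orderOf_dvd_iff_zpow_eq_one.mpr h1
      rwa [hk] at h2
    have hpa : (p : ℤ) ∣ a := by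
      have h2 : ((p ^ (k - 1) : ℕ) : ℤ) * (p : ℤ) ∣ ((p ^ (k - 1) : ℕ) : ℤ) * a := by
        have e : ((p ^ (k - 1) : ℕ) : ℤ) * (p : ℤ) = ((p ^ k : ℕ) : ℤ) := by
          push_cast
          rw [← pow_succ]
          congr 1
          omega
        rw [e, mul_comm ((p ^ (k - 1) : ℕ) : ℤ) a]
        exact hdvd
      have hne : ((p ^ (k - 1) : ℕ) : ℤ) ≠ 0 :=
        Int.natCast_ne_zero.mpr (pow_ne_zero _ hp.out.ne_zero)
      exact (mul_dvd_mul_iff_left hne).mp h2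
    obtain ⟨b, hb⟩ := hpa
    -- the element h of order p
    set h : A := g * (x ^ b)⁻¹ with hh
    have hhp : h ^ p = 1 := by
      rw [hh, mul_pow, inv_pow, ← zpow_natCast (x ^ b), ← zpow_mul, ← ha, hb,
        mul_comm b (p : ℤ)]
      simp
    have hhnot : h ∉ Subgroup.zpowers x := by
      intro hmem
      apply hgnot
      have hgeq : g = h * x ^ b := by rw [hh]; group
      rw [hgeq]
      exact mul_mem hmem (zpow_mem (Subgroup.mem_zpowers x) b)
    have hh1 : h ≠ 1 := by
      intro h1
      exact hhnot (h1 ▸ one_mem _)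
    -- ⟨x⟩ ⊓ ⟨h⟩ = ⊥
    have hhpz : h ^ (p : ℤ) = 1 := by rw [zpow_natCast, hhp]
    have hinf : Subgroup.zpowers x ⊓ Subgroup.zpowers h = ⊥ := by
      rw [eq_bot_iff]
      intro z hz
      rw [Subgroup.mem_inf] at hz
      obtain ⟨hz1, hz2⟩ := hz
      obtain ⟨t, rfl⟩ := Subgroup.mem_zpowers_iff.mp hz2
      by_cases hpt : (p : ℤ) ∣ t
      · obtain ⟨s, rfl⟩ := hpt
        rw [zpow_mul, hhpz, one_zpow]
        exact Subgroup.mem_bot.mpr rfl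
      · exfalso
        have hp' : Prime (p : ℤ) := Int.prime_iff_natAbs_prime.mpr (by simpa using hp.out)
        obtain ⟨u, v, huv⟩ := (hp'.coprime_iff_not_dvd.mpr hpt)
        apply hhnot
        have heq : h = (h ^ t) ^ v := by
          conv_lhs => rw [← zpow_one h, ← huv]
          rw [zpow_add, zpow_mul', zpow_mul', hhpz, one_zpow, one_mul]
        rw [heq]
        exact zpow_mem hz1 v
    -- quotient
    set N := Subgroup.zpowers h with hN
    have hordh : orderOf h = p := orderOf_eq_prime hhp hh1
    have hcardN : Nat.card N = p := by rw [hN, Nat.card_zpowers, hordh]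
    have hcardQ : Nat.card (A ⧸ N) ≤ n := by
      have hcards := Subgroup.card_eq_card_quotient_mul_card_subgroup N
      rw [hcardN] at hcards
      have hp2 : 2 ≤ p := hp.out.two_le
      have hQpos : 0 < Nat.card (A ⧸ N) := Nat.card_pos
      nlinarith [hcard, hcards]
    set π := QuotientGroup.mk' N
    set x' := π x with hx'
    -- order of x' equals order of x
    have hmemN : ∀ m : ℕ, x ^ m ∈ N → x ^ m = 1 := by
      intro m hm
      have hmm : x ^ m ∈ Subgroup.zpowers x ⊓ N :=
        Subgroup.mem_inf.mpr ⟨pow_mem (Subgroup.mem_zpowers x) m, hm⟩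
      rw [hinf] at hmm
      exact Subgroup.mem_bot.mp hmm
    have hord' : orderOf x' = orderOf x := by
      apply Nat.dvd_antisymm (orderOf_map_dvd π x)
      apply orderOf_dvd_of_pow_eq_one
      apply hmemN
      rw [← QuotientGroup.eq_one_iff, ← QuotientGroup.mk'_apply, map_pow]
      exact pow_orderOf_eq_one x'
    have hq' : ∀ a : A ⧸ N, a ^ orderOf x' = 1 := by
      intro a
      obtain ⟨z, rfl⟩ := QuotientGroup.mk'_surjective N a
      rw [hord', ← map_pow, hq z, map_one]
    obtain ⟨H', hH1, hH2⟩ := ih (A ⧸ N) hcardQ (hA.to_quotient N) x' hq'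
    exact pullback_complement N x hinf H' hH1 hH2

/-- A nontrivial element `x` of a finite abelian `p`-group `A` splits from `A`
(`A = ⟨x⟩ × H` for some subgroup `H`) iff there is no `y ∈ A` with
`orderOf (x * y ^ p) < orderOf x`. -/
theorem split_iff_no_smaller_order_mod_pth_powers {A : Type*} [CommGroup A] [Finite A]
    {p : ℕ} [Fact p.Prime] (hA : IsPGroup p A) (x : A) (hx : x ≠ 1) :
    (∃ H : Subgroup A, Subgroup.zpowers x ⊓ H = ⊥ ∧ Subgroup.zpowers x ⊔ H = ⊤) ↔
      ¬ ∃ y : A, orderOf (x * y ^ p) < orderOf x := by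
  have hp : Fact p.Prime := inferInstance
  obtain ⟨k, hk⟩ := IsPGroup.iff_orderOf.mp hA x
  have hk0 : k ≠ 0 := by
    rintro rfl
    rw [pow_zero, orderOf_eq_one_iff] at hk
    exact hx hk
  constructor
  · rintro ⟨H, hinf, hsup⟩ ⟨y, hy⟩
    have hy' : y ∈ Subgroup.zpowers x ⊔ H := by rw [hsup]; trivial
    obtain ⟨c, hc, h, hh, rfl⟩ := Subgroup.mem_sup.mp hy'
    obtain ⟨nn, rfl⟩ := Subgroup.mem_zpowers_iff.mp hc
    set m := orderOf (x * (x ^ nn * h) ^ p) with hm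
    have hm1 : (x * (x ^ nn * h) ^ p) ^ m = 1 := pow_orderOf_eq_one _
    have key : x ^ ((1 + nn * (p : ℤ)) * (m : ℤ)) * h ^ (p * m) = 1 := by
      rw [← hm1, mul_pow, ← pow_mul, mul_pow, ← mul_assoc,
        ← zpow_natCast x m, ← zpow_natCast (x ^ nn) (p * m), ← zpow_mul, ← zpow_add]
      congr 2
      push_cast
      ring
    have hmem : x ^ ((1 + nn * (p : ℤ)) * (m : ℤ)) ∈ Subgroup.zpowers x ⊓ H := by
      rw [Subgroup.mem_inf]
      constructor
      · exact zpow_mem (Subgroup.mem_zpowers x) _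
      · have : x ^ ((1 + nn * (p : ℤ)) * (m : ℤ)) = (h ^ (p * m))⁻¹ := by
          rw [eq_inv_iff_mul_eq_one]
          exact key
        rw [this]
        exact inv_mem (pow_mem hh _)
    rw [hinf, Subgroup.mem_bot] at hmem
    have hdvd : (orderOf x : ℤ) ∣ (1 + nn * (p : ℤ)) * (m : ℤ) :=
      orderOf_dvd_iff_zpow_eq_one.mpr hmem
    rw [hk] at hdvd
    push_cast at hdvd
    have hp' : Prime (p : ℤ) := Int.prime_iff_natAbs_prime.mpr (by simpa using hp.out)
    have hnd : ¬ (p : ℤ) ∣ (1 + nn * (p : ℤ)) := by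
      intro hd
      have : (p : ℤ) ∣ 1 := by
        have h3 := dvd_sub hd (Dvd.intro_left nn rfl)
        simpa using h3
      have := Int.le_of_dvd one_pos this
      have h2 := hp.out.two_le
      omega
    have hcop : IsCoprime ((p : ℤ) ^ k) (1 + nn * (p : ℤ)) :=
      (hp'.coprime_iff_not_dvd.mpr hnd).pow_left
    have hdm : ((p : ℤ) ^ k) ∣ (m : ℤ) := hcop.dvd_of_dvd_mul_left hdvd
    have : orderOf x ∣ m := by
      rw [hk]
      exact_mod_cast hdm
    have hmpos : 0 < m := orderOf_pos _
    have := Nat.le_of_dvd hmpos this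
    omega
  · intro hno
    set q := orderOf x with hqdef
    set B := (powMonoidHom q : A →* A).range with hB
    have hxq1 : x ^ (q : ℤ) = 1 := by rw [zpow_natCast]; exact pow_orderOf_eq_one x
    -- key divisibility property
    have key : ∀ m : ℕ, x ^ m ∈ B → q ∣ m := by
      intro m hm
      by_contra hqm
      obtain ⟨w, hw⟩ := hm
      rw [powMonoidHom_apply] at hw
      set d := Nat.gcd m q with hd
      have hdq : d ∣ q := Nat.gcd_dvd_right m q
      have hdm : d ∣ m := Nat.gcd_dvd_left m q
      set v := w ^ Nat.gcdA m q with hvdef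
      have hv : v ^ q = x ^ d := by
        have e1 : v ^ q = (w ^ q) ^ Nat.gcdA m q := by
          rw [hvdef, ← zpow_natCast (w ^ Nat.gcdA m q), ← zpow_mul, mul_comm, zpow_mul,
            zpow_natCast]
        rw [e1, hw, ← zpow_natCast x m, ← zpow_mul]
        calc x ^ ((m : ℤ) * Nat.gcdA m q)
            = x ^ ((m : ℤ) * Nat.gcdA m q) * (x ^ (q : ℤ)) ^ Nat.gcdB m q := by
              rw [hxq1, one_zpow, mul_one]
          _ = x ^ ((m : ℤ) * Nat.gcdA m q + (q : ℤ) * Nat.gcdB m q) := by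
              rw [zpow_add, zpow_mul, zpow_mul]
          _ = x ^ ((d : ℕ) : ℤ) := by rw [← Nat.gcd_eq_gcd_ab m q]
          _ = x ^ d := zpow_natCast x d
      obtain ⟨j, hj, hdj⟩ := (Nat.dvd_prime_pow hp.out).mp (hk ▸ hdq)
      have hjk : j < k := by
        rcases lt_or_eq_of_le hj with h' | h'
        · exact h'
        · exfalso
          apply hqm
          have : d = q := by rw [hdj, h', ← hk]
          rw [← this]
          exact hdm
      set w2 := v ^ p ^ (k - 1 - j) with hw2def
      have e2 : p ^ j * p ^ (k - 1 - j) = p ^ (k - 1) := by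
        rw [← pow_add]
        congr 1
        omega
      have hw2 : x ^ p ^ (k - 1) = w2 ^ q := by
        rw [← e2, pow_mul, ← hdj, ← hv, ← pow_mul, mul_comm, pow_mul]
      apply hno
      refine ⟨w2⁻¹, ?_⟩
      have hy1 : (x * w2⁻¹ ^ p) ^ p ^ (k - 1) = 1 := by
        have e3 : p * p ^ (k - 1) = p ^ k := by
          rw [← pow_succ']
          congr 1
          omega
        rw [mul_pow, ← pow_mul, e3, ← hk, inv_pow, hw2]
        exact mul_inv_cancel _
      have hdvd2 := orderOf_dvd_of_pow_eq_one hy1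
      have hle : orderOf (x * w2⁻¹ ^ p) ≤ p ^ (k - 1) :=
        Nat.le_of_dvd (pow_pos hp.out.pos _) hdvd2
      have hlt : p ^ (k - 1) < p ^ k := Nat.pow_lt_pow_right hp.out.one_lt (by omega)
      omega
    -- ⟨x⟩ ⊓ B = ⊥
    have hBinf : Subgroup.zpowers x ⊓ B = ⊥ := by
      rw [eq_bot_iff]
      intro z hz
      rw [Subgroup.mem_inf] at hz
      obtain ⟨hz1, hz2⟩ := hz
      obtain ⟨t, rfl⟩ := Subgroup.mem_zpowers_iff.mp hz1
      have hqpos : 0 < q := orderOf_pos x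
      set m := (t % (q : ℤ)).toNat with hmdef
      have hmnn : (0 : ℤ) ≤ t % (q : ℤ) := Int.emod_nonneg t (by exact_mod_cast hqpos.ne')
      have hteq : x ^ t = x ^ m := by
        have e4 : t = (q : ℤ) * (t / (q : ℤ)) + t % (q : ℤ) := (Int.mul_ediv_add_emod t _).symm
        rw [e4, zpow_add, zpow_mul, hxq1, one_zpow, one_mul, ← zpow_natCast x m, hmdef,
          Int.toNat_of_nonneg hmnn]
      have hmlt : m < q := by
        have h5 : t % (q : ℤ) < (q : ℤ) := Int.emod_lt_of_pos t (by exact_mod_cast hqpos)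
        clear_value m q
        rw [hmdef]
        omega
      have hmB : x ^ m ∈ B := by
        rw [← hteq]
        exact hz2
      have hqdm := key m hmB
      have hm0 : m = 0 := Nat.eq_zero_of_dvd_of_lt hqdm hmlt
      rw [hteq, hm0, pow_zero]
      exact Subgroup.mem_bot.mpr rfl
    -- pass to the quotient
    set π := QuotientGroup.mk' B with hπ
    have hord' : orderOf (π x) = q := by
      apply Nat.dvd_antisymm (orderOf_map_dvd π x)
      apply key
      rw [← QuotientGroup.eq_one_iff, ← QuotientGroup.mk'_apply, map_pow]
      exact pow_orderOf_eq_one (π x)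
    have hq' : ∀ a : A ⧸ B, a ^ orderOf (π x) = 1 := by
      intro a
      obtain ⟨z, rfl⟩ := QuotientGroup.mk'_surjective B a
      rw [hord', ← map_pow, QuotientGroup.mk'_apply, QuotientGroup.eq_one_iff]
      exact ⟨z, rfl⟩
    haveI : Finite (A ⧸ B) := Quotient.finite _
    obtain ⟨H', h1, h2⟩ := split_of_max_order p (Nat.card (A ⧸ B)) (A ⧸ B) le_rfl
      (hA.to_quotient B) (π x) hq'
    exact pullback_complement B x hBinf H' h1 h2
end

section
/- Let A be a finite abelian group with decomposition A = P₁ × ⋯ × Pₘ into its Sylow subgroups. A nontrivial element x = (x₁, …, xₘ) splits from A if and only if each xᵢ is either trivial or splits from Pᵢ. -/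
/-- Let `A` be a finite abelian group decomposed as the internal direct product of its
Sylow subgroups `S i` (so `S i` is a `p i`-group for pairwise distinct primes `p i`).
A nontrivial element `x` with components `c i ∈ S i` splits from `A` iff each component
`c i` is either trivial or splits from `S i`. -/
theorem split_iff_components_split_sylow {A : Type*} [CommGroup A] [Finite A]
    {m : ℕ} (p : Fin m → ℕ) (hp : ∀ i, (p i).Prime) (hpne : Function.Injective p)
    (S : Fin m → Subgroup A)
    (hS : ∀ i, IsPGroup (p i) (S i))
    (hindep : iSupIndep S)
    (hsup : ⨆ i, S i = ⊤)
    (x : A) (hx : x ≠ 1) (c : Fin m → A) (hc : ∀ i, c i ∈ S i) (hxc : x = ∏ i, c i) :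
    (∃ H : Subgroup A, Subgroup.zpowers x ⊓ H = ⊥ ∧ Subgroup.zpowers x ⊔ H = ⊤) ↔
      ∀ i, c i = 1 ∨
        ∃ H : Subgroup A, H ≤ S i ∧ Subgroup.zpowers (c i) ⊓ H = ⊥ ∧
          Subgroup.zpowers (c i) ⊔ H = S i := by
  classical
  have hN : Nat.card A ≠ 0 := Nat.card_pos.ne'
  -- the order of any element of `S j` is a power of `p j` dividing `ordProj[p j] (Nat.card A)`
  have hord : ∀ j : Fin m, ∀ s ∈ S j,
      orderOf s ∣ (p j) ^ ((Nat.card A).factorization (p j)) := by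
    intro j s hs
    obtain ⟨k, hk⟩ := hS j ⟨s, hs⟩
    have hs1 : s ^ (p j) ^ k = 1 := by
      simpa using congrArg (Subtype.val) hk
    obtain ⟨l, _, hl⟩ := (Nat.dvd_prime_pow (hp j)).mp (orderOf_dvd_of_pow_eq_one hs1)
    have hdN : (p j) ^ l ∣ Nat.card A := hl ▸ orderOf_dvd_natCard s
    have hla : l ≤ (Nat.card A).factorization (p j) :=
      ((hp j).pow_dvd_iff_le_factorization hN).mp hdN
    exact hl ▸ pow_dvd_pow _ hla
  -- construct "projection" exponents `e i` by CRT
  have key : ∀ i : Fin m, ∃ e : ℕ,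
      (∀ j, j ≠ i → ∀ s ∈ S j, s ^ e = 1) ∧ (∀ s ∈ S i, s ^ e = s) := by
    intro i
    set N := Nat.card A with hNdef
    set q : ℕ := (p i) ^ (N.factorization (p i)) with hq
    set r : ℕ := N / q with hr
    have cop : Nat.Coprime q r :=
      Nat.Coprime.pow_left _ (Nat.coprime_ordCompl (hp i) hN)
    obtain ⟨e, he1, he0⟩ := Nat.chineseRemainder cop 1 0
    refine ⟨e, ?_, ?_⟩
    · intro j hj s hs
      have hcop : Nat.Coprime (orderOf s) q := by
        obtain ⟨k, hk⟩ := hS j ⟨s, hs⟩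
        have hs1 : s ^ (p j) ^ k = 1 := by
          simpa using congrArg (Subtype.val) hk
        obtain ⟨l, _, hl⟩ := (Nat.dvd_prime_pow (hp j)).mp (orderOf_dvd_of_pow_eq_one hs1)
        rw [hl, hq]
        exact Nat.Coprime.pow _ _
          ((Nat.coprime_primes (hp j) (hp i)).mpr (fun h => hj (hpne h)))
      have hdr : orderOf s ∣ r := by
        have hdN : orderOf s ∣ q * r := by
          rw [hq, hr, hq, Nat.ordProj_mul_ordCompl_eq_self N (p i)]
          exact orderOf_dvd_natCard s
        exact Nat.Coprime.dvd_of_dvd_mul_left hcop hdN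
      have : orderOf s ∣ e := hdr.trans ((Nat.modEq_zero_iff_dvd).mp he0)
      exact orderOf_dvd_iff_pow_eq_one.mp this
    · intro s hs
      have : e ≡ 1 [MOD orderOf s] := Nat.ModEq.of_dvd (hord i s hs) he1
      calc s ^ e = s ^ 1 := pow_eq_pow_iff_modEq.mpr this
        _ = s := pow_one s
  choose e he using key
  -- the map `a ↦ a ^ e i` lands in `S i`
  have hφS : ∀ i : Fin m, ∀ a : A, a ^ e i ∈ S i := by
    intro i a
    have ha : a ∈ ⨆ j, S j := hsup ▸ Subgroup.mem_top a
    refine Subgroup.iSup_induction S (C := fun a => a ^ e i ∈ S i) ha ?_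
      (by simpa using (S i).one_mem) ?_
    · intro j s hs
      by_cases hj : j = i
      · subst hj; rw [(he j).2 s hs]; exact hs
      · rw [(he i).1 j hj s hs]
        exact (S i).one_mem
    · intro a b hA hB
      simp only [mul_pow]
      exact mul_mem hA hB
  have hφx : ∀ i : Fin m, x ^ e i = c i := by
    intro i
    rw [hxc, ← Finset.prod_pow]
    rw [Finset.prod_eq_single i (fun j _ hj => (he i).1 j hj (c j) (hc j))
      (fun h => absurd (Finset.mem_univ i) h)]
    exact (he i).2 (c i) (hc i)
  have hcx : ∀ i : Fin m, c i ∈ Subgroup.zpowers x := fun i =>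
    Subgroup.mem_zpowers_iff.mpr ⟨(e i : ℤ), by rw [zpow_natCast]; exact hφx i⟩
  constructor
  · rintro ⟨H, hinf, hsupH⟩ i
    by_cases hci : c i = 1
    · exact Or.inl hci
    right
    refine ⟨H ⊓ S i, inf_le_right, ?_, ?_⟩
    · rw [eq_bot_iff, ← hinf]
      exact le_inf (inf_le_left.trans (Subgroup.zpowers_le.mpr (hcx i)))
        (inf_le_right.trans inf_le_left)
    · apply le_antisymm
      · exact sup_le (Subgroup.zpowers_le.mpr (hc i)) inf_le_right
      · intro s hs
        have hst : s ∈ Subgroup.zpowers x ⊔ H := by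
          rw [hsupH]; exact Subgroup.mem_top s
        obtain ⟨y, hy, z, hz, hyz⟩ := Subgroup.mem_sup.mp hst
        obtain ⟨k, rfl⟩ := Subgroup.mem_zpowers_iff.mp hy
        have hss : s = (c i) ^ k * z ^ e i := by
          have h1 : s ^ e i = s := (he i).2 s hs
          have h2 : (x ^ k * z) ^ e i = (c i) ^ k * z ^ e i := by
            rw [mul_pow, ← zpow_natCast, ← zpow_mul, mul_comm k (e i : ℤ), zpow_mul,
              zpow_natCast, hφx i]
          rw [← h1, ← hyz, h2]
        rw [hss]
        exact Subgroup.mul_mem_sup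
          (Subgroup.zpow_mem _ (Subgroup.mem_zpowers _) k)
          (Subgroup.mem_inf.mpr ⟨Subgroup.pow_mem H hz (e i), hφS i z⟩)
  · intro h
    have hK : ∀ i, ∃ K : Subgroup A, K ≤ S i ∧ Subgroup.zpowers (c i) ⊓ K = ⊥ ∧
        Subgroup.zpowers (c i) ⊔ K = S i := by
      intro i
      rcases h i with hci | hKi
      · exact ⟨S i, le_refl _, by simp [hci, Subgroup.zpowers_one_eq_bot],
          by simp [hci, Subgroup.zpowers_one_eq_bot]⟩
      · exact hKi
    choose K hKS hKinf hKsup using hK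
    refine ⟨⨆ i, K i, ?_, ?_⟩
    · rw [eq_bot_iff]
      intro a ha
      obtain ⟨hax, haK⟩ := Subgroup.mem_inf.mp ha
      obtain ⟨k, rfl⟩ := Subgroup.mem_zpowers_iff.mp hax
      have hck : ∀ i, (c i) ^ k = 1 := by
        intro i
        have h1 : (x ^ k) ^ e i = (c i) ^ k := by
          rw [← zpow_natCast, ← zpow_mul, mul_comm k (e i : ℤ), zpow_mul,
            zpow_natCast, hφx i]
        have h2 : (x ^ k) ^ e i ∈ K i := by
          refine Subgroup.iSup_induction K (C := fun a => a ^ e i ∈ K i) haK ?_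
            (by simpa using (K i).one_mem) ?_
          · intro j s hs
            by_cases hj : j = i
            · subst hj; rw [(he j).2 s (hKS j hs)]; exact hs
            · rw [(he i).1 j hj s (hKS j hs)]; exact (K i).one_mem
          · intro a b hA hB
            simp only [mul_pow]; exact mul_mem hA hB
        have hmem : (c i) ^ k ∈ Subgroup.zpowers (c i) ⊓ K i :=
          Subgroup.mem_inf.mpr ⟨Subgroup.zpow_mem _ (Subgroup.mem_zpowers _) k, h1 ▸ h2⟩
        rw [hKinf i] at hmem
        exact hmem
      have hx1 : x ^ k = 1 := by
        have hprod : x ^ k = ∏ i, (c i) ^ k := by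
          rw [hxc]; exact map_prod (zpowGroupHom k) c Finset.univ
        rw [hprod]
        exact Finset.prod_eq_one (fun i _ => hck i)
      simp [hx1]
    · rw [eq_top_iff, ← hsup]
      refine iSup_le fun i => ?_
      rw [← hKsup i]
      exact sup_le
        (le_trans (Subgroup.zpowers_le.mpr (hcx i)) le_sup_left)
        (le_trans (le_iSup K i) le_sup_right)
end

section
/- Let G be a finite group and z ∈ Z(G). Then z splits from G if and only if the coset zG′ splits from the abelianization G/G′ and ⟨z⟩ ∩ G′ = {1}. -/
/-- A central element `z` of a finite group `G` splits from `G` (i.e. `G = ⟨z⟩ × H`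
for some normal subgroup `H`) iff its image in the abelianization `G/G'` splits from
`G/G'` and `⟨z⟩ ∩ G' = 1`. -/
theorem central_split_iff_abelianization {G : Type*} [Group G] [Finite G]
    (z : G) (hz : z ∈ Subgroup.center G) :
    (∃ H : Subgroup G, H.Normal ∧ Subgroup.zpowers z ⊓ H = ⊥ ∧
        Subgroup.zpowers z ⊔ H = ⊤) ↔
      ((∃ H : Subgroup (Abelianization G),
          Subgroup.zpowers (Abelianization.of z) ⊓ H = ⊥ ∧
          Subgroup.zpowers (Abelianization.of z) ⊔ H = ⊤) ∧
        Subgroup.zpowers z ⊓ commutator G = ⊥) := by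
  have hsurj : Function.Surjective (Abelianization.of : G →* Abelianization G) := fun x =>
    QuotientGroup.induction_on x fun g => ⟨g, rfl⟩
  have hker : ∀ g : G, Abelianization.of g = 1 ↔ g ∈ commutator G := fun g =>
    QuotientGroup.eq_one_iff g
  constructor
  · rintro ⟨H, hN, hinf, hsup⟩
    -- the commutator subgroup is contained in H
    have hcomm : commutator G ≤ H := by
      rw [commutator_def, Subgroup.commutator_le]
      intro g₁ hg₁ g₂ hg₂
      have hg₁' : g₁ ∈ (↑(Subgroup.zpowers z ⊔ H) : Set G) := by
        rw [hsup]; trivial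
      rw [Subgroup.mul_normal] at hg₁'
      obtain ⟨s, hs, h, hh, rfl⟩ := hg₁'
      obtain ⟨k, rfl⟩ := hs
      have hc : ∀ x : G, z ^ k * x = x * z ^ k := fun x =>
        (Subgroup.mem_center_iff.mp ((Subgroup.center G).zpow_mem hz k) x).symm
      open scoped commutatorElement in
      have heq : ⁅z ^ k * h, g₂⁆ = ⁅h, g₂⁆ := by
        simp only [commutatorElement_def, mul_inv_rev]
        calc z ^ k * h * g₂ * (h⁻¹ * (z ^ k)⁻¹) * g₂⁻¹
            = (z ^ k * (h * g₂ * h⁻¹)) * (z ^ k)⁻¹ * g₂⁻¹ := by group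
          _ = ((h * g₂ * h⁻¹) * z ^ k) * (z ^ k)⁻¹ * g₂⁻¹ := by rw [hc]
          _ = h * g₂ * h⁻¹ * g₂⁻¹ := by group
      rw [heq]
      have : h * (g₂ * h⁻¹ * g₂⁻¹) ∈ H :=
        H.mul_mem hh (hN.conj_mem h⁻¹ (H.inv_mem hh) g₂)
      simpa [commutatorElement_def, mul_assoc] using this
    refine ⟨⟨H.map Abelianization.of, ?_, ?_⟩, ?_⟩
    · -- intersection is trivial
      rw [eq_bot_iff]
      rintro x ⟨hx1, hx2⟩
      obtain ⟨k, rfl⟩ := hx1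
      obtain ⟨h, hh, hhx⟩ := hx2
      have : Abelianization.of (z ^ k * h⁻¹) = 1 := by
        rw [map_mul, map_inv, map_zpow, hhx]
        group
      rw [hker] at this
      have hzkH : z ^ k ∈ H := by
        have := hcomm this
        have : z ^ k * h⁻¹ * h ∈ H := H.mul_mem this hh
        simpa using this
      have : z ^ k ∈ Subgroup.zpowers z ⊓ H := ⟨Subgroup.zpow_mem _ (Subgroup.mem_zpowers z) k, hzkH⟩
      rw [hinf] at this
      simp only [Subgroup.mem_bot] at this
      simp [← map_zpow, this]
    · rw [← MonoidHom.map_zpowers, ← Subgroup.map_sup, hsup,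
        Subgroup.map_top_of_surjective _ hsurj]
    · rw [eq_bot_iff, ← hinf]
      exact inf_le_inf_left _ hcomm
  · rintro ⟨⟨K, hKinf, hKsup⟩, hzc⟩
    refine ⟨K.comap Abelianization.of, Subgroup.Normal.comap inferInstance _, ?_, ?_⟩
    · rw [eq_bot_iff]
      rintro x ⟨hx1, hx2⟩
      obtain ⟨k, rfl⟩ := hx1
      have h1 : Abelianization.of z ^ k ∈ Subgroup.zpowers (Abelianization.of z) ⊓ K := by
        refine ⟨Subgroup.zpow_mem _ (Subgroup.mem_zpowers _) k, ?_⟩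
        simpa [map_zpow] using hx2
      rw [hKinf, Subgroup.mem_bot] at h1
      have h2 : z ^ k ∈ commutator G := by
        rw [← hker]
        simpa [map_zpow] using h1
      have : z ^ k ∈ Subgroup.zpowers z ⊓ commutator G :=
        ⟨Subgroup.zpow_mem _ (Subgroup.mem_zpowers z) k, h2⟩
      rw [hzc] at this
      exact this
    · rw [eq_top_iff]
      intro g _
      have : Abelianization.of g ∈ Subgroup.zpowers (Abelianization.of z) ⊔ K := by
        rw [hKsup]; trivial
      rw [Subgroup.mem_sup] at this
      obtain ⟨a, ha, b, hb, hab⟩ := this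
      obtain ⟨k, rfl⟩ := ha
      have hmem : g * z ^ (-k) ∈ K.comap Abelianization.of := by
        simp only [Subgroup.mem_comap, map_mul, map_zpow]
        have : Abelianization.of g * Abelianization.of z ^ (-k) = b := by
          rw [← hab]; beta_reduce; rw [zpow_neg, mul_comm (Abelianization.of z ^ k) b, mul_assoc, mul_inv_cancel, mul_one]
        rw [this]; exact hb
      have : (g * z ^ (-k)) * z ^ k ∈ Subgroup.zpowers z ⊔ K.comap Abelianization.of :=
        Subgroup.mul_mem _ (Subgroup.mem_sup_right hmem)
          (Subgroup.mem_sup_left (Subgroup.zpow_mem _ (Subgroup.mem_zpowers z) k))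
      simpa using this
end

section
/- Let U ≤ G be finite groups and x ∈ Z(G) ∩ U. If x splits from G then x splits from U. -/
open scoped Pointwise


/-- If `U ≤ G` are finite groups and `x ∈ Z(G) ∩ U` splits from `G`
(`G = ⟨x⟩ × H` for a normal subgroup `H`), then `x` splits from `U`:
there is `H ≤ U`, normalized by `U`, with `⟨x⟩ ⊓ H = ⊥` and `⟨x⟩ ⊔ H = U`. -/
theorem central_split_of_subgroup {G : Type*} [Group G] [Finite G]
    (U : Subgroup G) (x : G) (hxZ : x ∈ Subgroup.center G) (hxU : x ∈ U)
    (hsplit : ∃ H : Subgroup G, H.Normal ∧ Subgroup.zpowers x ⊓ H = ⊥ ∧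
      Subgroup.zpowers x ⊔ H = ⊤) :
    ∃ H : Subgroup G, H ≤ U ∧ (∀ u ∈ U, ∀ h ∈ H, u * h * u⁻¹ ∈ H) ∧
      Subgroup.zpowers x ⊓ H = ⊥ ∧ Subgroup.zpowers x ⊔ H = U := by
  obtain ⟨H, hN, hinf, hsup⟩ := hsplit
  refine ⟨U ⊓ H, inf_le_left, ?_, ?_, ?_⟩
  · intro u hu h hh
    exact ⟨U.mul_mem (U.mul_mem hu hh.1) (U.inv_mem hu), hN.conj_mem h hh.2 u⟩
  · rw [eq_bot_iff, ← hinf]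
    exact le_inf inf_le_left (le_trans inf_le_right inf_le_right)
  · apply le_antisymm
    · exact sup_le ((Subgroup.zpowers_le).2 hxU) inf_le_left
    · intro u hu
      have : u ∈ Subgroup.zpowers x ⊔ H := hsup ▸ Subgroup.mem_top u
      have hmem : u ∈ (Subgroup.zpowers x : Set G) * (H : Set G) := by
        rw [← Subgroup.mul_normal (Subgroup.zpowers x) H]
        exact this
      obtain ⟨a, ha, h, hh, rfl⟩ := hmem
      have haU : a ∈ U := (Subgroup.zpowers_le.2 hxU) ha
      have hhU : h ∈ U := by
        have := U.mul_mem (U.inv_mem haU) hu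
        simpa using this
      exact Subgroup.mul_mem_sup ha ⟨hhU, hh⟩
end

section
/- Let G = G₁ × G₂ be a direct product of finite groups and z = (z₁, z₂) ∈ Z(G) a p-element. Then z splits from G if and only if there exists i ∈ {1,2} such that the order of zᵢ equals the order of z and zᵢ splits from Gᵢ. -/
open Subgroup

/-- An element splits from a group iff there is a retraction onto its zpowers. -/
lemma split_iff_retract {G : Type*} [Group G] (x : G) :
    (∃ H : Subgroup G, H.Normal ∧ Subgroup.zpowers x ⊓ H = ⊥ ∧
        Subgroup.zpowers x ⊔ H = ⊤) ↔
    ∃ f : G →* G, (∀ g, f g ∈ Subgroup.zpowers x) ∧ f x = x := by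
  constructor
  · rintro ⟨H, hN, hinf, hsup⟩
    let φ : Subgroup.zpowers x →* G ⧸ H :=
      (QuotientGroup.mk' H).comp (Subgroup.zpowers x).subtype
    have hinj : Function.Injective φ := by
      rw [injective_iff_map_eq_one]
      rintro ⟨g, hg⟩ h
      have hgH : g ∈ H := by
        simpa [φ, QuotientGroup.eq_one_iff] using h
      have : g ∈ Subgroup.zpowers x ⊓ H := ⟨hg, hgH⟩
      rw [hinf] at this
      exact Subtype.ext this
    have hsurj : Function.Surjective φ := by
      intro q
      obtain ⟨g, rfl⟩ := QuotientGroup.mk'_surjective H q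
      have hg : g ∈ ((Subgroup.zpowers x ⊔ H : Subgroup G) : Set G) := by
        rw [hsup]; trivial
      rw [Subgroup.mul_normal] at hg
      obtain ⟨a, ha, h, hh, rfl⟩ := hg
      refine ⟨⟨a, ha⟩, ?_⟩
      show QuotientGroup.mk' H a = QuotientGroup.mk' H (a * h)
      simp [QuotientGroup.eq_iff_div_mem, hh]
      simpa [QuotientGroup.eq_one_iff] using hh
    let e := MulEquiv.ofBijective φ ⟨hinj, hsurj⟩
    refine ⟨(((Subgroup.zpowers x).subtype.comp e.symm.toMonoidHom).comp
        (QuotientGroup.mk' H)), fun g => ?_, ?_⟩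
    · exact (e.symm _).2
    · have h1 : e ⟨x, Subgroup.mem_zpowers x⟩ = QuotientGroup.mk' H x := rfl
      have h2 : e.symm (QuotientGroup.mk' H x) = ⟨x, Subgroup.mem_zpowers x⟩ :=
        e.symm_apply_eq.mpr h1.symm
      exact congrArg Subtype.val h2
  · rintro ⟨f, hf, hfx⟩
    have key : ∀ k : ℤ, f (x ^ k) = x ^ k := fun k => by rw [map_zpow, hfx]
    refine ⟨f.ker, inferInstance, ?_, ?_⟩
    · rw [eq_bot_iff]
      rintro g ⟨hg1, hg2⟩
      obtain ⟨k, rfl⟩ := hg1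
      have : x ^ k = 1 := by rw [← key k]; exact hg2
      simpa [Subgroup.mem_bot] using this
    · rw [eq_top_iff]
      intro g _
      have h1 : f g ∈ Subgroup.zpowers x ⊔ f.ker := Subgroup.mem_sup_left (hf g)
      have h2 : (f g)⁻¹ * g ∈ f.ker := by
        obtain ⟨k, hk⟩ := hf g
        have : f (f g) = f g := by rw [← hk, key]
        simp [MonoidHom.mem_ker, this]
      simpa using mul_mem h1 (Subgroup.mem_sup_right h2)

/-- Forward direction, one component. -/
lemma retract_comp_of_retract {G₁ G₂ : Type*} [Group G₁] [Group G₂] {p n : ℕ}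
    (hp : p.Prime) (z : G₁ × G₂) (hn : orderOf z = p ^ n)
    (f : G₁ × G₂ →* G₁ × G₂) (hf : ∀ g, f g ∈ Subgroup.zpowers z)
    (a : ℤ) (ha : f (z.1, 1) = z ^ a) (hpa : ¬ (p : ℤ) ∣ a) :
    orderOf z.1 = orderOf z ∧
      ∃ r : G₁ →* G₁, (∀ g, r g ∈ Subgroup.zpowers z.1) ∧ r z.1 = z.1 := by
  have hdvd : orderOf z.1 ∣ p ^ n := by
    rw [← hn]
    exact orderOf_map_dvd (MonoidHom.fst G₁ G₂) z
  have hprime : Prime (p : ℤ) := Nat.prime_iff_prime_int.mp hp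
  have hcop : IsCoprime (a : ℤ) ((p : ℤ) ^ n) :=
    (IsCoprime.pow_left ((hprime.coprime_iff_not_dvd).mpr hpa)).symm
  have hfst : ∀ (x : G₁ × G₂) (k : ℤ), (x ^ k).1 = x.1 ^ k :=
    fun x k => map_zpow (MonoidHom.fst G₁ G₂) x k
  have hpow1 : ((z.1, (1 : G₂)) : G₁ × G₂) ^ (orderOf z.1) = 1 := by
    refine Prod.ext ?_ ?_ <;>
      simp [← map_pow (MonoidHom.fst G₁ G₂), ← map_pow (MonoidHom.snd G₁ G₂),
        pow_orderOf_eq_one]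
  have h2 : ((p : ℤ)) ^ n ∣ a * (orderOf z.1 : ℤ) := by
    have : z ^ (a * (orderOf z.1 : ℤ)) = 1 := by
      rw [zpow_mul, ← ha, ← map_zpow, zpow_natCast, hpow1, map_one]
    have := orderOf_dvd_iff_zpow_eq_one.mpr this
    rw [hn] at this
    exact_mod_cast this
  have h3 : (p : ℤ) ^ n ∣ (orderOf z.1 : ℤ) := hcop.symm.dvd_of_dvd_mul_left h2
  have h4 : p ^ n ∣ orderOf z.1 := by exact_mod_cast h3
  have hord : orderOf z.1 = p ^ n := Nat.dvd_antisymm hdvd h4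
  refine ⟨hord.trans hn.symm, ?_⟩
  obtain ⟨u, v, huv⟩ := hcop
  refine ⟨{ toFun := fun g => (f (g, 1)).1 ^ u
            map_one' := by
              show (f ((1 : G₁), (1 : G₂))).1 ^ u = 1
              rw [Prod.mk_one_one, map_one, Prod.fst_one, one_zpow]
            map_mul' := fun g h => ?_ }, fun g => ?_, ?_⟩
  · obtain ⟨i, hi⟩ := hf (g, 1)
    obtain ⟨j, hj⟩ := hf (h, 1)
    have hmul : f (g * h, 1) = f (g, 1) * f (h, 1) := by
      rw [← map_mul]
      congr 1
      simp [Prod.mk_mul_mk]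
    have hcomm : Commute (f (g, 1)).1 (f (h, 1)).1 := by
      rw [← hi, ← hj, hfst, hfst]
      exact Commute.zpow_zpow (Commute.refl z.1) i j
    show (f (g * h, 1)).1 ^ u = (f (g, 1)).1 ^ u * (f (h, 1)).1 ^ u
    rw [hmul, Prod.fst_mul, hcomm.mul_zpow]
  · obtain ⟨i, hi⟩ := hf (g, 1)
    show (f (g, 1)).1 ^ u ∈ Subgroup.zpowers z.1
    rw [← hi, hfst, ← zpow_mul]
    exact Subgroup.zpow_mem _ (Subgroup.mem_zpowers z.1) _
  · show (f (z.1, 1)).1 ^ u = z.1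
    rw [ha, hfst, ← zpow_mul]
    have hd : (orderOf z.1 : ℤ) ∣ a * u - 1 := by
      rw [hord]
      refine ⟨-v, ?_⟩
      push_cast
      linarith [huv]
    calc z.1 ^ (a * u) = z.1 ^ (a * u - 1) * z.1 ^ (1 : ℤ) := by
          rw [← zpow_add]; ring_nf
      _ = z.1 := by rw [orderOf_dvd_iff_zpow_eq_one.mp hd, one_mul, zpow_one]

/-- Backward direction, one component. -/
lemma retract_of_retract_comp {G₁ G₂ : Type*} [Group G₁] [Group G₂]
    (z : G₁ × G₂) (h1 : orderOf z.1 = orderOf z)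
    (r : G₁ →* G₁) (hr : ∀ g, r g ∈ Subgroup.zpowers z.1) (hrz : r z.1 = z.1) :
    ∃ f : G₁ × G₂ →* G₁ × G₂, (∀ g, f g ∈ Subgroup.zpowers z) ∧ f z = z := by
  have hmem : ∀ g : Subgroup.zpowers z, (g : G₁ × G₂).1 ∈ Subgroup.zpowers z.1 := by
    rintro ⟨g, k, rfl⟩
    exact ⟨k, by simp⟩
  let χ : Subgroup.zpowers z →* Subgroup.zpowers z.1 :=
    ((MonoidHom.fst G₁ G₂).comp (Subgroup.zpowers z).subtype).codRestrict _ hmem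
  have hinj : Function.Injective χ := by
    rw [injective_iff_map_eq_one]
    rintro ⟨g, k, rfl⟩ h
    have h' : ((z ^ k : G₁ × G₂)).1 = 1 := congrArg Subtype.val h
    have hk : z.1 ^ k = 1 := (map_zpow (MonoidHom.fst G₁ G₂) z k).symm.trans h'
    have : (orderOf z : ℤ) ∣ k := by
      rw [← h1]; exact orderOf_dvd_iff_zpow_eq_one.mpr hk
    exact Subtype.ext (orderOf_dvd_iff_zpow_eq_one.mp this)
  have hsurj : Function.Surjective χ := by
    rintro ⟨u, k, rfl⟩
    exact ⟨⟨z ^ k, Subgroup.zpow_mem _ (Subgroup.mem_zpowers z) k⟩,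
      Subtype.ext (map_zpow (MonoidHom.fst G₁ G₂) z k)⟩
  let e := MulEquiv.ofBijective χ ⟨hinj, hsurj⟩
  let ψ : Subgroup.zpowers z.1 →* G₁ × G₂ :=
    (Subgroup.zpowers z).subtype.comp e.symm.toMonoidHom
  refine ⟨ψ.comp ((r.codRestrict (Subgroup.zpowers z.1) hr).comp
      (MonoidHom.fst G₁ G₂)), fun g => (e.symm _).2, ?_⟩
  have hez : e ⟨z, Subgroup.mem_zpowers z⟩ = ⟨z.1, Subgroup.mem_zpowers z.1⟩ := rfl
  have h2 : e.symm ⟨z.1, Subgroup.mem_zpowers z.1⟩ = ⟨z, Subgroup.mem_zpowers z⟩ :=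
    e.symm_apply_eq.mpr hez.symm
  show ((e.symm ⟨r z.1, hr z.1⟩ : Subgroup.zpowers z) : G₁ × G₂) = z
  have : (⟨r z.1, hr z.1⟩ : Subgroup.zpowers z.1) = ⟨z.1, Subgroup.mem_zpowers z.1⟩ :=
    Subtype.ext hrz
  rw [this, h2]

/-- Let `G = G₁ × G₂` be a direct product of finite groups and `z = (z₁, z₂)` a
central `p`-element of `G`. Then `z` splits from `G` iff for some `i ∈ {1,2}` the
component `zᵢ` has the same order as `z` and splits from `Gᵢ`. -/
theorem central_pelement_split_prod_iff {G₁ G₂ : Type*} [Group G₁] [Group G₂]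
    [Finite G₁] [Finite G₂] {p : ℕ} [Fact p.Prime]
    (z : G₁ × G₂) (hz : z ∈ Subgroup.center (G₁ × G₂))
    (hzp : ∃ n : ℕ, orderOf z = p ^ n) :
    (∃ H : Subgroup (G₁ × G₂), H.Normal ∧ Subgroup.zpowers z ⊓ H = ⊥ ∧
        Subgroup.zpowers z ⊔ H = ⊤) ↔
      ((orderOf z.1 = orderOf z ∧
          ∃ H : Subgroup G₁, H.Normal ∧ Subgroup.zpowers z.1 ⊓ H = ⊥ ∧
            Subgroup.zpowers z.1 ⊔ H = ⊤) ∨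
        (orderOf z.2 = orderOf z ∧
          ∃ H : Subgroup G₂, H.Normal ∧ Subgroup.zpowers z.2 ⊓ H = ⊥ ∧
            Subgroup.zpowers z.2 ⊔ H = ⊤)) := by
  have hp := (Fact.out : p.Prime)
  rw [split_iff_retract z, split_iff_retract z.1, split_iff_retract z.2]
  set c : G₁ × G₂ ≃* G₂ × G₁ := MulEquiv.prodComm with hc
  have hc1 : ∀ g : G₁ × G₂, (c g).1 = g.2 := fun g => rfl
  have hordc : orderOf (c z) = orderOf z :=
    orderOf_injective c.toMonoidHom c.injective z
  constructor
  · rintro ⟨f, hf, hfz⟩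
    obtain ⟨n, hn⟩ := hzp
    by_cases hone : z = 1
    · left
      refine ⟨by rw [hone]; simp, 1, fun g => Subgroup.one_mem _, ?_⟩
      have : z.1 = 1 := by rw [hone]; rfl
      simp [this]
    · obtain ⟨a, ha⟩ := Subgroup.mem_zpowers_iff.mp (hf (z.1, 1))
      obtain ⟨b, hb⟩ := Subgroup.mem_zpowers_iff.mp (hf (1, z.2))
      have hn1 : n ≠ 0 := by
        rintro rfl
        exact hone (orderOf_eq_one_iff.mp (by simpa using hn))
      have hzab : z ^ (a + b) = z := by
        rw [zpow_add, ha, hb, ← map_mul]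
        have : ((z.1, (1 : G₂)) : G₁ × G₂) * (1, z.2) = z := by
          simp [Prod.mk_mul_mk]
        rw [this, hfz]
      have hab : (orderOf z : ℤ) ∣ (a + b - 1) := by
        apply orderOf_dvd_iff_zpow_eq_one.mpr
        rw [zpow_sub, hzab, zpow_one, mul_inv_cancel]
      have hcase : ¬ (p : ℤ) ∣ a ∨ ¬ (p : ℤ) ∣ b := by
        by_contra h
        push_neg at h
        have hpd : (p : ℤ) ∣ a + b - 1 := by
          refine dvd_trans ?_ hab
          rw [hn]
          exact_mod_cast dvd_pow_self (p : ℤ) hn1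
        have : (p : ℤ) ∣ 1 := by
          have := dvd_sub (dvd_add h.1 h.2) hpd
          simpa using this
        exact (Nat.prime_iff_prime_int.mp hp).not_dvd_one this
      rcases hcase with hpa | hpb
      · exact Or.inl (retract_comp_of_retract hp z hn f hf a ha.symm hpa)
      · right
        have hn' : orderOf (c z) = p ^ n := hordc.trans hn
        let f' : G₂ × G₁ →* G₂ × G₁ :=
          c.toMonoidHom.comp (f.comp c.symm.toMonoidHom)
        have hf' : ∀ g, f' g ∈ Subgroup.zpowers (c z) := by
          intro g
          obtain ⟨k, hk⟩ := Subgroup.mem_zpowers_iff.mp (hf (c.symm g))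
          exact ⟨k, by simp [f', ← hk, map_zpow]⟩
        have hb' : f' ((c z).1, 1) = (c z) ^ b := by
          have hsw : c.symm ((z.2, (1:G₁)) : G₂ × G₁) = ((1 : G₁), z.2) := rfl
          show (c.toMonoidHom.comp (f.comp c.symm.toMonoidHom)) (z.2, 1) = c z ^ b
          simp only [MonoidHom.comp_apply, MulEquiv.coe_toMonoidHom]
          rw [hsw, ← hb, map_zpow]
        have res := retract_comp_of_retract hp (c z) hn' f' hf' b hb' hpb
        rw [hc1 z, hordc] at res
        exact res
  · rintro (⟨h1, r, hr, hrz⟩ | ⟨h2, r, hr, hrz⟩)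
    · exact retract_of_retract_comp z h1 r hr hrz
    · have h1' : orderOf (c z).1 = orderOf (c z) := by rw [hc1 z, hordc]; exact h2
      obtain ⟨f', hf', hfz'⟩ := retract_of_retract_comp (c z) h1' r
        (by rw [hc1 z]; exact hr) (by rw [hc1 z]; exact hrz)
      refine ⟨c.symm.toMonoidHom.comp (f'.comp c.toMonoidHom), fun g => ?_, ?_⟩
      · obtain ⟨k, hk⟩ := Subgroup.mem_zpowers_iff.mp (hf' (c g))
        refine ⟨k, ?_⟩
        simp only [MonoidHom.comp_apply, MulEquiv.coe_toMonoidHom, ← hk, map_zpow]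
        simp
      · simp only [MonoidHom.comp_apply, MulEquiv.coe_toMonoidHom, hfz']
        simp
end

section
/- Let G be a finite non-abelian group. Then the non-commuting graph of G restricted to G ∖ Z(G) is connected: for any two non-central elements g, h there is a path g = x₀, x₁, …, xₙ = h of non-central elements with [xᵢ, xᵢ₊₁] ≠ 1 for all i. -/
/-- The non-commuting graph of a finite non-abelian group `G`, restricted to the
non-central elements, is connected: any two non-central elements are joined by a path
of non-central elements in which consecutive elements do not commute. -/
theorem noncommuting_graph_connected {G : Type*} [Group G] [Finite G]
    (hG : ¬ ∀ a b : G, a * b = b * a)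
    (g h : G) (hg : g ∉ Subgroup.center G) (hh : h ∉ Subgroup.center G) :
    Relation.ReflTransGen
      (fun a b : G => a ∉ Subgroup.center G ∧ b ∉ Subgroup.center G ∧ a * b ≠ b * a)
      g h := by
  classical
  by_cases hcom : g * h = h * g
  · have hg' := hg
    have hh' := hh
    rw [Subgroup.mem_center_iff] at hg' hh'
    push_neg at hg' hh'
    obtain ⟨a, ha⟩ := hg'
    obtain ⟨b, hb⟩ := hh'
    have notboth : ∃ x : G, x * g ≠ g * x ∧ x * h ≠ h * x := by
      by_cases hah : a * h = h * a
      · by_cases hbg : b * g = g * b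
        · refine ⟨a * b, ?_, ?_⟩
          · intro hc
            apply ha
            have : (a * g) * b = (g * a) * b := by
              calc (a * g) * b = a * (g * b) := by rw [mul_assoc]
                _ = a * (b * g) := by rw [hbg]
                _ = (a * b) * g := by rw [mul_assoc]
                _ = g * (a * b) := hc
                _ = (g * a) * b := by rw [mul_assoc]
            exact mul_right_cancel this
          · intro hc
            apply hb
            have : a * (b * h) = a * (h * b) := by
              calc a * (b * h) = (a * b) * h := by rw [mul_assoc]
                _ = h * (a * b) := hc
                _ = (h * a) * b := by rw [mul_assoc]
                _ = (a * h) * b := by rw [hah]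
                _ = a * (h * b) := by rw [mul_assoc]
            exact mul_left_cancel this
        · exact ⟨b, hbg, hb⟩
      · exact ⟨a, ha, hah⟩
    obtain ⟨x, hxg, hxh⟩ := notboth
    have hx : x ∉ Subgroup.center G := by
      rw [Subgroup.mem_center_iff]
      intro h'
      exact hxg (h' g).symm
    exact Relation.ReflTransGen.head ⟨hg, hx, fun e => hxg e.symm⟩
      (Relation.ReflTransGen.single ⟨hx, hh, hxh⟩)
  · exact Relation.ReflTransGen.single ⟨hg, hh, hcom⟩
end

section
/- Let G be a finite non-abelian group and let N₁, …, Nₘ be the non-abelian components of G (the subgroups generated by the connected components of the non-commuting graph restricted to the set M constructed by the greedy centralizer-order procedure). Then G = N₁⋯Nₘ is a central decomposition of G: the Nᵢ pairwise centralize each other, generate G, each Nᵢ contains Z(G), and each Nᵢ is non-abelian. -/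
section NonAbelianComponents

variable (G : Type*) [Group G]

/-- Stages of the greedy construction of the set `M`: `greedyM 0` is the set of
non-central elements of maximal centralizer order; `greedyM (n+1)` additionally
contains the non-central elements outside `⟨greedyM n⟩` of maximal centralizer order
among those. -/
def greedyM : ℕ → Set G
  | 0 => {g | g ∉ Subgroup.center G ∧ ∀ h : G, h ∉ Subgroup.center G →
      Nat.card (Subgroup.centralizer {h}) ≤ Nat.card (Subgroup.centralizer {g})}
  | (n + 1) => greedyM n ∪
      {g | g ∉ Subgroup.center G ∧ g ∉ Subgroup.closure (greedyM n) ∧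
        ∀ h : G, h ∉ Subgroup.center G → h ∉ Subgroup.closure (greedyM n) →
          Nat.card (Subgroup.centralizer {h}) ≤ Nat.card (Subgroup.centralizer {g})}

/-- The stable result `M` of the greedy construction. -/
def greedyMset : Set G := ⋃ n, greedyM G n

/-- Adjacency in the non-commuting graph restricted to `M`. -/
def ncAdj (a b : G) : Prop := a ∈ greedyMset G ∧ b ∈ greedyMset G ∧ a * b ≠ b * a

/-- The connected component of `g` in the non-commuting graph on `M`. -/
def ncComponent (g : G) : Set G :=
  {h ∈ greedyMset G | Relation.ReflTransGen (ncAdj G) g h}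

/-- The non-abelian component of `G` associated with `g ∈ M`: the subgroup generated
by the connected component of `g` in the non-commuting graph on `M`. -/
def nonAbelianComponent (g : G) : Subgroup G := Subgroup.closure (ncComponent G g)

end NonAbelianComponents

namespace NCDecompAux

variable {G : Type*} [Group G]

lemma mem_greedyM_zero {g : G} :
    g ∈ greedyM G 0 ↔ g ∉ Subgroup.center G ∧ ∀ h : G, h ∉ Subgroup.center G →
      Nat.card (Subgroup.centralizer {h}) ≤ Nat.card (Subgroup.centralizer {g}) := by
  simp [greedyM]

lemma mem_greedyM_succ {g : G} {n : ℕ} :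
    g ∈ greedyM G (n + 1) ↔ g ∈ greedyM G n ∨
      (g ∉ Subgroup.center G ∧ g ∉ Subgroup.closure (greedyM G n) ∧
        ∀ h : G, h ∉ Subgroup.center G → h ∉ Subgroup.closure (greedyM G n) →
          Nat.card (Subgroup.centralizer {h}) ≤ Nat.card (Subgroup.centralizer {g})) := by
  simp [greedyM, Set.mem_union]

lemma greedyM_subset_succ (n : ℕ) : greedyM G n ⊆ greedyM G (n + 1) :=
  fun _ hg => mem_greedyM_succ.mpr (Or.inl hg)

lemma greedyM_zero_subset (n : ℕ) : greedyM G 0 ⊆ greedyM G n := by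
  induction n with
  | zero => exact subset_rfl
  | succ n ih => exact ih.trans (greedyM_subset_succ n)

lemma greedyM_subset_set (n : ℕ) : greedyM G n ⊆ greedyMset G :=
  Set.subset_iUnion (greedyM G) n

lemma not_center_of_mem_greedyM {g : G} : ∀ {n : ℕ}, g ∈ greedyM G n →
    g ∉ Subgroup.center G := by
  intro n
  induction n with
  | zero => intro hg; exact (mem_greedyM_zero.mp hg).1
  | succ n ih =>
    intro hg
    rcases mem_greedyM_succ.mp hg with h | h
    · exact ih h
    · exact h.1

lemma not_center_of_mem_greedyMset {g : G} (hg : g ∈ greedyMset G) :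
    g ∉ Subgroup.center G := by
  obtain ⟨n, hn⟩ := Set.mem_iUnion.mp hg
  exact not_center_of_mem_greedyM hn

lemma centralizer_zmul {z : G} (hz : z ∈ Subgroup.center G) (g : G) :
    Subgroup.centralizer ({z * g} : Set G) = Subgroup.centralizer {g} := by
  ext c
  simp only [Subgroup.mem_centralizer_iff, Set.mem_singleton_iff, forall_eq]
  have hzc : c * z = z * c := Subgroup.mem_center_iff.mp hz c
  constructor
  · intro h
    apply mul_left_cancel (a := z)
    calc z * (g * c) = z * g * c := by rw [mul_assoc]
      _ = c * (z * g) := h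
      _ = c * z * g := by rw [mul_assoc]
      _ = z * c * g := by rw [hzc]
      _ = z * (c * g) := by rw [mul_assoc]
  · intro h
    calc z * g * c = z * (g * c) := by rw [mul_assoc]
      _ = z * (c * g) := by rw [h]
      _ = z * c * g := by rw [mul_assoc]
      _ = c * z * g := by rw [hzc]
      _ = c * (z * g) := by rw [mul_assoc]

lemma zmul_not_center {z g : G} (hz : z ∈ Subgroup.center G)
    (hg : g ∉ Subgroup.center G) : z * g ∉ Subgroup.center G := by
  intro h
  apply hg
  have := (Subgroup.center G).mul_mem ((Subgroup.center G).inv_mem hz) h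
  rwa [inv_mul_cancel_left] at this

lemma exists_max_on {S : Set G} (hne : S.Nonempty) (f : G → ℕ) (hfin : S.Finite) :
    ∃ g ∈ S, ∀ h ∈ S, f h ≤ f g := by
  obtain ⟨g, hg, hmax⟩ := Set.Finite.exists_maximalFor f S hfin hne
  refine ⟨g, hg, fun h hh => ?_⟩
  by_contra hlt
  push_neg at hlt
  exact absurd (hmax hh hlt.le) (not_le.mpr hlt)

lemma exists_not_center (hG : ¬ ∀ a b : G, a * b = b * a) :
    ∃ g : G, g ∉ Subgroup.center G := by
  by_contra h
  push_neg at h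
  exact hG fun a b => Subgroup.mem_center_iff.mp (h b) a

lemma greedyM_zero_nonempty [Finite G] (hG : ¬ ∀ a b : G, a * b = b * a) :
    (greedyM G 0).Nonempty := by
  obtain ⟨g₀, hg₀⟩ := exists_not_center hG
  obtain ⟨g, hg, hmax⟩ := exists_max_on (S := {g : G | g ∉ Subgroup.center G})
    ⟨g₀, hg₀⟩ (fun g => Nat.card (Subgroup.centralizer ({g} : Set G))) (Set.toFinite _)
  exact ⟨g, mem_greedyM_zero.mpr ⟨hg, fun h hh => hmax h hh⟩⟩

lemma zmul_mem_greedyM [Finite G] (hG : ¬ ∀ a b : G, a * b = b * a) :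
    ∀ n : ℕ, ∀ z ∈ Subgroup.center G, ∀ g ∈ greedyM G n, z * g ∈ greedyM G n := by
  intro n
  induction n with
  | zero =>
    intro z hz g hg
    obtain ⟨hgc, hmax⟩ := mem_greedyM_zero.mp hg
    exact mem_greedyM_zero.mpr ⟨zmul_not_center hz hgc, fun h hh => by
      rw [centralizer_zmul hz]; exact hmax h hh⟩
  | succ n ih =>
    intro z hz g hg
    rcases mem_greedyM_succ.mp hg with hg | hg
    · exact mem_greedyM_succ.mpr (Or.inl (ih z hz g hg))
    · obtain ⟨hgc, hgcl, hmax⟩ := hg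
      have hzcl : z ∈ Subgroup.closure (greedyM G n) := by
        obtain ⟨s, hs⟩ := (greedyM_zero_nonempty hG).mono (greedyM_zero_subset n)
        have hzs := ih z hz s hs
        have hz' : z = (z * s) * s⁻¹ := by rw [mul_inv_cancel_right]
        rw [hz']
        exact mul_mem (Subgroup.subset_closure hzs)
          (inv_mem (Subgroup.subset_closure hs))
      refine mem_greedyM_succ.mpr (Or.inr ⟨zmul_not_center hz hgc, ?_, ?_⟩)
      · intro hmem
        apply hgcl
        have := mul_mem (inv_mem hzcl) hmem
        rwa [inv_mul_cancel_left] at this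
      · intro h hh hhcl
        rw [centralizer_zmul hz]
        exact hmax h hh hhcl

lemma zmul_mem_greedyMset [Finite G] (hG : ¬ ∀ a b : G, a * b = b * a)
    {z g : G} (hz : z ∈ Subgroup.center G) (hg : g ∈ greedyMset G) :
    z * g ∈ greedyMset G := by
  obtain ⟨n, hn⟩ := Set.mem_iUnion.mp hg
  exact Set.mem_iUnion.mpr ⟨n, zmul_mem_greedyM hG n z hz g hn⟩

lemma exists_fixed [Finite G] : ∃ N : ℕ, greedyM G (N + 1) = greedyM G N := by
  by_contra h
  push_neg at h
  have hstrict : ∀ n : ℕ, (greedyM G n).ncard < (greedyM G (n + 1)).ncard := fun n =>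
    Set.ncard_lt_ncard (ssubset_of_subset_of_ne (greedyM_subset_succ n) (Ne.symm (h n)))
      (Set.toFinite _)
  have hn : ∀ n : ℕ, n ≤ (greedyM G n).ncard := by
    intro n
    induction n with
    | zero => exact Nat.zero_le _
    | succ n ih => exact Nat.lt_of_le_of_lt ih (hstrict n)
  have hb : (greedyM G (Nat.card G + 1)).ncard ≤ Nat.card G := by
    have := Set.ncard_le_ncard (Set.subset_univ (greedyM G (Nat.card G + 1)))
      (Set.toFinite _)
    rwa [Set.ncard_univ] at this
  have := hn (Nat.card G + 1)
  omega

lemma closure_greedyMset_eq_top [Finite G] (hG : ¬ ∀ a b : G, a * b = b * a) :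
    Subgroup.closure (greedyMset G) = ⊤ := by
  obtain ⟨N, hN⟩ := exists_fixed (G := G)
  set C := Subgroup.closure (greedyM G N) with hC
  have hempty : ∀ g : G, g ∉ Subgroup.center G → g ∈ C := by
    by_contra h
    push_neg at h
    obtain ⟨g₀, hg₀c, hg₀⟩ := h
    obtain ⟨g, ⟨hgz, hgC⟩, hmax⟩ :=
      exists_max_on (S := {g : G | g ∉ Subgroup.center G ∧ g ∉ C}) ⟨g₀, hg₀c, hg₀⟩
        (fun g => Nat.card (Subgroup.centralizer ({g} : Set G))) (Set.toFinite _)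
    have hmem : g ∈ greedyM G (N + 1) :=
      mem_greedyM_succ.mpr (Or.inr ⟨hgz, hgC, fun h hz hc => hmax h ⟨hz, hc⟩⟩)
    rw [hN] at hmem
    exact hgC (Subgroup.subset_closure hmem)
  have hCtop : C = ⊤ := by
    by_contra hCne
    obtain ⟨a, ha⟩ : ∃ a : G, a ∉ C := by
      by_contra h
      push_neg at h
      exact hCne ((Subgroup.eq_top_iff' C).mpr h)
    have haz : a ∈ Subgroup.center G := by
      by_contra h'
      exact ha (hempty a h')
    obtain ⟨b, hbz⟩ := exists_not_center hG
    have hbC : b ∈ C := hempty b hbz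
    have habC : a * b ∉ C := by
      intro h
      apply ha
      have := mul_mem h (inv_mem hbC)
      rwa [mul_inv_cancel_right] at this
    have habz : a * b ∈ Subgroup.center G := by
      by_contra h'
      exact habC (hempty _ h')
    apply hbz
    have := (Subgroup.center G).mul_mem ((Subgroup.center G).inv_mem haz) habz
    rwa [inv_mul_cancel_left] at this
  rw [eq_top_iff, ← hCtop]
  exact Subgroup.closure_mono (greedyM_subset_set N)

lemma exists_noncomm [Finite G] (hG : ¬ ∀ a b : G, a * b = b * a)
    {g : G} (hg : g ∈ greedyMset G) : ∃ m ∈ greedyMset G, g * m ≠ m * g := by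
  by_contra h
  push_neg at h
  apply not_center_of_mem_greedyMset hg
  have hle : Subgroup.closure (greedyMset G) ≤ Subgroup.centralizer {g} := by
    rw [Subgroup.closure_le]
    intro m hm
    rw [SetLike.mem_coe, Subgroup.mem_centralizer_iff]
    intro x hx
    rw [Set.mem_singleton_iff] at hx
    subst hx
    exact h m hm
  rw [closure_greedyMset_eq_top hG] at hle
  rw [Subgroup.mem_center_iff]
  intro c
  have := hle (Subgroup.mem_top c)
  rw [Subgroup.mem_centralizer_iff] at this
  exact (this g rfl).symm

lemma ncAdj_symm {a b : G} (h : ncAdj G a b) : ncAdj G b a :=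
  ⟨h.2.1, h.1, fun e => h.2.2 e.symm⟩

lemma self_mem_ncComponent {g : G} (hg : g ∈ greedyMset G) : g ∈ ncComponent G g :=
  ⟨hg, Relation.ReflTransGen.refl⟩

end NCDecompAux

open NCDecompAux in
/-- For a finite non-abelian group `G`, the non-abelian components form a central
decomposition of `G`: they generate `G`, components of non-connected elements
centralize each other, each contains the center, and each is non-abelian. -/
theorem nonabelian_components_central_decomposition
    {G : Type*} [Group G] [Finite G] (hG : ¬ ∀ a b : G, a * b = b * a) :
    (⨆ g ∈ greedyMset G, nonAbelianComponent G g) = ⊤ ∧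
    (∀ g ∈ greedyMset G, ∀ h ∈ greedyMset G, ¬ Relation.ReflTransGen (ncAdj G) g h →
      ∀ a ∈ nonAbelianComponent G g, ∀ b ∈ nonAbelianComponent G h, a * b = b * a) ∧
    (∀ g ∈ greedyMset G, Subgroup.center G ≤ nonAbelianComponent G g) ∧
    (∀ g ∈ greedyMset G, ∃ a ∈ nonAbelianComponent G g,
      ∃ b ∈ nonAbelianComponent G g, a * b ≠ b * a) := by
  refine ⟨?_, ?_, ?_, ?_⟩
  · -- the components generate G
    rw [eq_top_iff, ← closure_greedyMset_eq_top hG, Subgroup.closure_le]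
    intro g hg
    have h1 : g ∈ nonAbelianComponent G g :=
      Subgroup.subset_closure (self_mem_ncComponent hg)
    have h2 : nonAbelianComponent G g ≤ ⨆ g ∈ greedyMset G, nonAbelianComponent G g :=
      le_iSup₂ (f := fun (g : G) (_ : g ∈ greedyMset G) => nonAbelianComponent G g) g hg
    exact h2 h1
  · -- non-connected components centralize each other
    intro g hg h hh hcon a ha b hb
    have hcomm : ∀ x ∈ ncComponent G g, ∀ y ∈ ncComponent G h, x * y = y * x := by
      intro x hx y hy
      by_contra hne
      apply hcon
      have hadj : ncAdj G x y := ⟨hx.1, hy.1, hne⟩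
      have hgy : Relation.ReflTransGen (ncAdj G) g y := hx.2.tail hadj
      have hyh : Relation.ReflTransGen (ncAdj G) y h :=
        (@Relation.ReflTransGen.symmetric _ (ncAdj G) ⟨fun _ _ => ncAdj_symm⟩).symm _ _ hy.2
      exact hgy.trans hyh
    have hbC : b ∈ Subgroup.centralizer (ncComponent G g) := by
      have : nonAbelianComponent G h ≤ Subgroup.centralizer (ncComponent G g) := by
        rw [nonAbelianComponent, Subgroup.closure_le]
        intro y hy
        rw [SetLike.mem_coe, Subgroup.mem_centralizer_iff]
        intro x hx
        exact hcomm x hx y hy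
      exact this hb
    have haC : a ∈ Subgroup.centralizer ({b} : Set G) := by
      have : nonAbelianComponent G g ≤ Subgroup.centralizer ({b} : Set G) := by
        rw [nonAbelianComponent, Subgroup.closure_le]
        intro x hx
        rw [SetLike.mem_coe, Subgroup.mem_centralizer_iff]
        intro y hy
        rw [Set.mem_singleton_iff] at hy
        subst hy
        exact (Subgroup.mem_centralizer_iff.mp hbC x hx).symm
      exact this ha
    exact (Subgroup.mem_centralizer_iff.mp haC b rfl).symm
  · -- each component contains the center
    intro g hg z hz
    obtain ⟨m, hm, hgm⟩ := exists_noncomm hG hg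
    have hadj_gm : ncAdj G g m := ⟨hg, hm, hgm⟩
    have hzg_mem : z * g ∈ greedyMset G := zmul_mem_greedyMset hG hz hg
    have hadj_mzg : ncAdj G m (z * g) := by
      refine ⟨hm, hzg_mem, fun e => hgm ?_⟩
      have hzm : m * z = z * m := Subgroup.mem_center_iff.mp hz m
      -- e : m * (z * g) = (z * g) * m
      apply mul_left_cancel (a := z)
      calc z * (g * m) = z * g * m := by rw [mul_assoc]
        _ = m * (z * g) := e.symm
        _ = m * z * g := by rw [mul_assoc]
        _ = z * m * g := by rw [hzm]
        _ = z * (m * g) := by rw [mul_assoc]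
    have hzg_comp : z * g ∈ ncComponent G g :=
      ⟨hzg_mem, (Relation.ReflTransGen.single hadj_gm).tail hadj_mzg⟩
    have h1 : z * g ∈ nonAbelianComponent G g := Subgroup.subset_closure hzg_comp
    have h2 : g ∈ nonAbelianComponent G g :=
      Subgroup.subset_closure (self_mem_ncComponent hg)
    have : z = (z * g) * g⁻¹ := by rw [mul_inv_cancel_right]
    rw [this]
    exact mul_mem h1 (inv_mem h2)
  · -- each component is non-abelian
    intro g hg
    obtain ⟨m, hm, hgm⟩ := exists_noncomm hG hg
    have hadj_gm : ncAdj G g m := ⟨hg, hm, hgm⟩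
    have h1 : g ∈ nonAbelianComponent G g :=
      Subgroup.subset_closure (self_mem_ncComponent hg)
    have h2 : m ∈ nonAbelianComponent G g :=
      Subgroup.subset_closure ⟨hm, Relation.ReflTransGen.single hadj_gm⟩
    exact ⟨g, h1, m, h2, hgm⟩
end

section
/- Let G be a finite group with center Z(G), arbitrary direct decomposition G = G₁ × ⋯ × G_d, and non-abelian components N₁, …, Nₘ with index sets Iⱼ = { i : Nᵢ ⊆ GⱼZ(G) }. For any subset J ⊆ {1,…,m}, the elements x ∈ G with C_x = ∏_{i ∈ J} Nᵢ are exactly those of the form x = z·∏_{i ∉ J} nᵢ with z ∈ Z(G) and nᵢ ∈ Nᵢ ∖ Z(G); in particular, for every collection of non-abelian direct factors there exists a full element. -/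
/-- The product `C_x` of the non-abelian components centralized by `x`. -/
def centComp {G : Type*} [Group G] (x : G) : Subgroup G :=
  ⨆ g ∈ {g ∈ greedyMset G | ∀ a ∈ nonAbelianComponent G g, Commute x a},
    nonAbelianComponent G g

section Aux
variable {G : Type*} [Group G]

lemma aux_ncAdj_symm {a b : G} (h : ncAdj G a b) : ncAdj G b a :=
  ⟨h.2.1, h.1, fun e => h.2.2 e.symm⟩

lemma aux_conn_symm {a b : G} (h : Relation.ReflTransGen (ncAdj G) a b) :
    Relation.ReflTransGen (ncAdj G) b a :=
  by
  induction h with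
  | refl => exact Relation.ReflTransGen.refl
  | tail _ hbc ih => exact Relation.ReflTransGen.head (aux_ncAdj_symm hbc) ih

lemma aux_mem_ncComponent_self {g : G} (hg : g ∈ greedyMset G) : g ∈ ncComponent G g :=
  ⟨hg, Relation.ReflTransGen.refl⟩

lemma aux_ncComponent_eq_of_conn {g h : G} (hc : Relation.ReflTransGen (ncAdj G) g h) :
    ncComponent G g = ncComponent G h := by
  ext a
  constructor
  · rintro ⟨ha, hga⟩; exact ⟨ha, (aux_conn_symm hc).trans hga⟩
  · rintro ⟨ha, hha⟩; exact ⟨ha, hc.trans hha⟩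

lemma aux_noncentral {g : G} (hg : g ∈ greedyMset G) : g ∉ Subgroup.center G := by
  obtain ⟨n, hg⟩ := Set.mem_iUnion.mp hg
  induction n with
  | zero => exact hg.1
  | succ n ih =>
    rcases hg with hg | hg
    · exact ih hg
    · exact hg.1

lemma aux_commute_of_not_conn {r s a b : G} (ha : a ∈ ncComponent G r)
    (hb : b ∈ ncComponent G s)
    (hrs : ¬ Relation.ReflTransGen (ncAdj G) r s) : Commute a b := by
  by_contra hab
  refine hrs (ha.2.trans ((Relation.ReflTransGen.single ?_).trans (aux_conn_symm hb.2)))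
  exact ⟨ha.1, hb.1, fun e => hab ((commute_iff_eq a b).mpr e)⟩

lemma aux_commute_NN {r s : G} (hrs : ¬ Relation.ReflTransGen (ncAdj G) r s) :
    ∀ a ∈ nonAbelianComponent G r, ∀ b ∈ nonAbelianComponent G s, Commute a b := by
  have h1 : ∀ a ∈ ncComponent G r, ∀ b ∈ nonAbelianComponent G s, Commute a b := by
    intro a ha b hb
    have hle : nonAbelianComponent G s ≤ Subgroup.centralizer {a} := by
      rw [nonAbelianComponent, Subgroup.closure_le]
      intro c hc
      rw [SetLike.mem_coe, Subgroup.mem_centralizer_singleton_iff]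
      exact (aux_commute_of_not_conn ha hc hrs).eq.symm
    have := Subgroup.mem_centralizer_singleton_iff.mp (hle hb)
    exact (commute_iff_eq a b).mpr this.symm
  intro a ha b hb
  have hle : nonAbelianComponent G r ≤ Subgroup.centralizer {b} := by
    rw [nonAbelianComponent, Subgroup.closure_le]
    intro c hc
    rw [SetLike.mem_coe, Subgroup.mem_centralizer_singleton_iff]
    exact (h1 c hc b hb).eq
  exact (commute_iff_eq a b).mpr (Subgroup.mem_centralizer_singleton_iff.mp (hle ha))

lemma aux_N_le_centralizer_N {r s : G} (h : ¬ Relation.ReflTransGen (ncAdj G) r s) :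
    nonAbelianComponent G s ≤ Subgroup.centralizer (nonAbelianComponent G r : Set G) := by
  intro b hb
  rw [Subgroup.mem_centralizer_iff]
  intro a ha
  exact (aux_commute_NN h a ha b hb).eq

lemma aux_mem_centralizerN_iff {r x : G} :
    x ∈ Subgroup.centralizer (nonAbelianComponent G r : Set G) ↔
      ∀ a ∈ nonAbelianComponent G r, Commute x a := by
  rw [Subgroup.mem_centralizer_iff]
  constructor
  · intro h a ha; exact (commute_iff_eq x a).mpr (h a ha).symm
  · intro h a ha; exact (h a ha).eq.symm

lemma aux_closure_greedyMset_eq_top [Finite G] (hG : ¬ ∀ a b : G, a * b = b * a) :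
    Subgroup.closure (greedyMset G) = ⊤ := by
  classical
  have hmono : ∀ n, Subgroup.closure (greedyM G n) ≤ Subgroup.closure (greedyM G (n + 1)) :=
    fun n => Subgroup.closure_mono Set.subset_union_left
  have hstab : ∃ n, Subgroup.closure (greedyM G n) = Subgroup.closure (greedyM G (n + 1)) := by
    by_contra hc
    push_neg at hc
    have hsm : StrictMono (fun n => ((Subgroup.closure (greedyM G n) : Set G)).ncard) := by
      apply strictMono_nat_of_lt_succ
      intro n
      refine Set.ncard_lt_ncard ?_ (Set.toFinite _)
      exact SetLike.coe_ssubset_coe.mpr ((hmono n).lt_of_ne (hc n))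
    have h1 : Nat.card G + 1 ≤ ((Subgroup.closure (greedyM G (Nat.card G + 1)) : Set G)).ncard :=
      hsm.le_apply
    have h2 : ((Subgroup.closure (greedyM G (Nat.card G + 1)) : Set G)).ncard ≤ Nat.card G := by
      rw [← Set.ncard_univ G]
      exact Set.ncard_le_ncard (Set.subset_univ _) (Set.toFinite _)
    omega
  obtain ⟨n, hn⟩ := hstab
  have hAll : ∀ g : G, g ∉ Subgroup.center G → g ∈ Subgroup.closure (greedyM G n) := by
    by_contra hc
    push_neg at hc
    obtain ⟨g0, hg0z, hg0c⟩ := hc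
    have := Fintype.ofFinite G
    set s : Finset G := Finset.univ.filter
      (fun h => h ∉ Subgroup.center G ∧ h ∉ Subgroup.closure (greedyM G n)) with hs
    have hsne : s.Nonempty := ⟨g0, by simp [hs, hg0z, hg0c]⟩
    obtain ⟨h0, hh0, hmax⟩ :=
      Finset.exists_max_image s (fun h => Nat.card (Subgroup.centralizer ({h} : Set G))) hsne
    rw [hs, Finset.mem_filter] at hh0
    have hmem : h0 ∈ greedyM G (n + 1) := by
      refine Or.inr ⟨hh0.2.1, hh0.2.2, fun h hz hcl => ?_⟩
      exact hmax h (by simp [hs, hz, hcl])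
    have : h0 ∈ Subgroup.closure (greedyM G n) := by
      rw [hn]
      exact Subgroup.subset_closure hmem
    exact hh0.2.2 this
  have htop : Subgroup.closure (greedyM G n) = ⊤ := by
    rw [eq_top_iff]
    intro g _
    by_cases hg : g ∈ Subgroup.center G
    · push_neg at hG
      obtain ⟨a, b, hab⟩ := hG
      have haz : a ∉ Subgroup.center G := fun h => hab (Subgroup.mem_center_iff.mp h b).symm
      have hga : g * a ∉ Subgroup.center G := fun h => haz (by
        have : a = g⁻¹ * (g * a) := by group
        rw [this]
        exact mul_mem (inv_mem hg) h)
      have : g = (g * a) * a⁻¹ := by group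
      rw [this]
      exact mul_mem (hAll _ hga) (inv_mem (hAll _ haz))
    · exact hAll g hg
  rw [eq_top_iff, ← htop]
  exact Subgroup.closure_mono (Set.subset_iUnion (fun k => greedyM G k) n)

lemma aux_mem_sup_of_commute {H K : Subgroup G} (hc : ∀ h ∈ H, ∀ k ∈ K, Commute h k) {x : G}
    (hx : x ∈ H ⊔ K) : ∃ h ∈ H, ∃ k ∈ K, x = h * k := by
  let L : Subgroup G :=
    { carrier := {x | ∃ h ∈ H, ∃ k ∈ K, x = h * k}
      one_mem' := ⟨1, one_mem _, 1, one_mem _, (one_mul 1).symm⟩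
      mul_mem' := by
        rintro x y ⟨h1, hh1, k1, hk1, rfl⟩ ⟨h2, hh2, k2, hk2, rfl⟩
        refine ⟨h1 * h2, mul_mem hh1 hh2, k1 * k2, mul_mem hk1 hk2, ?_⟩
        rw [(hc h2 hh2 k1 hk1).symm.mul_mul_mul_comm]
      inv_mem' := by
        rintro x ⟨h, hh, k, hk, rfl⟩
        refine ⟨h⁻¹, inv_mem hh, k⁻¹, inv_mem hk, ?_⟩
        rw [mul_inv_rev, ((hc h hh k hk).inv_inv).symm.eq]
    }
  have hle : H ⊔ K ≤ L := by
    refine sup_le (fun h hh => ⟨h, hh, 1, one_mem _, (mul_one h).symm⟩)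
      (fun k hk => ⟨1, one_mem _, k, hk, (one_mul k).symm⟩)
  exact hle hx

lemma aux_mem_of_map_prod_mem {H : Subgroup G} {l : List G} (hl : l.Nodup) {m : G → G} {r : G}
    (hr : r ∈ l) (hother : ∀ s ∈ l, s ≠ r → m s ∈ H) (hx : (l.map m).prod ∈ H) : m r ∈ H := by
  obtain ⟨l1, l2, rfl⟩ := List.append_of_mem hr
  rw [List.nodup_append] at hl
  obtain ⟨h1, h2, hdisj⟩ := hl
  have hr1 : r ∉ l1 := fun h => hdisj _ h _ List.mem_cons_self rfl
  have hr2 : r ∉ l2 := (List.nodup_cons.mp h2).1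
  have hA : (l1.map m).prod ∈ H := by
    refine Subgroup.list_prod_mem _ (fun y hy => ?_)
    obtain ⟨s, hs, rfl⟩ := List.mem_map.mp hy
    exact hother s (List.mem_append_left _ hs) (fun e => hr1 (e ▸ hs))
  have hB : (l2.map m).prod ∈ H := by
    refine Subgroup.list_prod_mem _ (fun y hy => ?_)
    obtain ⟨s, hs, rfl⟩ := List.mem_map.mp hy
    exact hother s (List.mem_append_right _ (List.mem_cons_of_mem _ hs))
      (fun e => hr2 (e ▸ hs))
  have key : m r = ((l1.map m).prod)⁻¹ * ((l1 ++ r :: l2).map m).prod * ((l2.map m).prod)⁻¹ := by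
    rw [List.map_append, List.prod_append, List.map_cons, List.prod_cons]
    group
  rw [key]
  exact mul_mem (mul_mem (inv_mem hA) hx) (inv_mem hB)

lemma aux_prod_split [DecidableEq G] {A B : Finset G} (hAB : Disjoint A B) {m : G → G}
    (hcomm : ∀ a ∈ A ∪ B, ∀ b ∈ A ∪ B, a ≠ b → Commute (m a) (m b)) :
    (((A ∪ B).toList).map m).prod = ((A.toList).map m).prod * ((B.toList).map m).prod := by
  have hperm : List.Perm ((A ∪ B).toList) (A.toList ++ B.toList) := by
    refine (List.perm_ext_iff_of_nodup (Finset.nodup_toList _) ?_).mpr ?_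
    · exact List.Nodup.append (Finset.nodup_toList _) (Finset.nodup_toList _)
        (fun a ha hb => Finset.disjoint_left.mp hAB (Finset.mem_toList.mp ha)
          (Finset.mem_toList.mp hb))
    · intro a
      simp [Finset.mem_toList, Finset.mem_union]
  have hpair : (((A ∪ B).toList).map m).Pairwise Commute := by
    rw [List.pairwise_map]
    refine List.Pairwise.imp_of_mem ?_ (Finset.nodup_toList (A ∪ B))
    intro a b ha hb hne
    exact hcomm a (Finset.mem_toList.mp ha) b (Finset.mem_toList.mp hb) hne
  rw [List.Perm.prod_eq' (hperm.map m) hpair, List.map_append, List.prod_append]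

lemma aux_exists_decomp {ι : Type*} [DecidableEq ι] {f : ι → Subgroup G} :
    ∀ S : Finset ι, (∀ r ∈ S, ∀ s ∈ S, r ≠ s → ∀ a ∈ f r, ∀ b ∈ f s, Commute a b) →
    ∀ x : G, x ∈ (⨆ r ∈ S, f r) →
    ∃ m : ι → G, (∀ r ∈ S, m r ∈ f r) ∧ x = ((S.toList).map m).prod := by
  intro S
  induction S using Finset.induction_on with
  | empty =>
    intro _ x hx
    rw [show (⨆ r ∈ (∅ : Finset ι), f r) = ⊥ by simp] at hx
    exact ⟨fun _ => 1, by simp, by simpa using (Subgroup.mem_bot.mp hx)⟩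
  | @insert a S' ha ih =>
    intro hcomm x hx
    rw [← Finset.sup_eq_iSup] at hx
    rw [Finset.sup_insert] at hx
    have hHK : ∀ h ∈ f a, ∀ k ∈ S'.sup f, Commute h k := by
      intro h hh k hk
      have : S'.sup f ≤ Subgroup.centralizer {h} := by
        refine Finset.sup_le (fun s hs => ?_)
        intro b hb
        rw [Subgroup.mem_centralizer_singleton_iff]
        exact (hcomm a (Finset.mem_insert_self _ _) s (Finset.mem_insert_of_mem hs)
          (fun e => ha (e ▸ hs)) h hh b hb).eq.symm
      exact (commute_iff_eq h k).mpr (Subgroup.mem_centralizer_singleton_iff.mp (this hk)).symm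
    obtain ⟨h, hh, k, hk, rfl⟩ := aux_mem_sup_of_commute hHK hx
    rw [Finset.sup_eq_iSup] at hk
    obtain ⟨m', hm', rfl⟩ := ih (fun r hr s hs hrs => hcomm r (Finset.mem_insert_of_mem hr)
      s (Finset.mem_insert_of_mem hs) hrs) k hk
    refine ⟨Function.update m' a h, ?_, ?_⟩
    · intro r hr
      rcases Finset.mem_insert.mp hr with rfl | hr
      · rw [Function.update_self]; exact hh
      · rw [Function.update_of_ne (ne_of_mem_of_not_mem hr ha)]; exact hm' r hr
    · have hmapeq : (S'.toList).map (Function.update m' a h) = (S'.toList).map m' := by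
        refine List.map_congr_left (fun s hs => ?_)
        exact Function.update_of_ne (ne_of_mem_of_not_mem (Finset.mem_toList.mp hs) ha) _ _
      have hperm : List.Perm (((insert a S').toList).map (Function.update m' a h))
          ((Function.update m' a h a) :: ((S'.toList).map (Function.update m' a h))) := by
        simpa using (Finset.toList_insert ha).map (Function.update m' a h)
      have hpair : (((insert a S').toList).map (Function.update m' a h)).Pairwise Commute := by
        rw [List.pairwise_map]
        refine List.Pairwise.imp_of_mem ?_ (Finset.nodup_toList _)
        intro r s hr hs hne
        have hrI := Finset.mem_toList.mp hr
        have hsI := Finset.mem_toList.mp hs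
        have hmr : Function.update m' a h r ∈ f r := by
          rcases Finset.mem_insert.mp hrI with rfl | hr'
          · rw [Function.update_self]; exact hh
          · rw [Function.update_of_ne (ne_of_mem_of_not_mem hr' ha)]; exact hm' r hr'
        have hms : Function.update m' a h s ∈ f s := by
          rcases Finset.mem_insert.mp hsI with rfl | hs'
          · rw [Function.update_self]; exact hh
          · rw [Function.update_of_ne (ne_of_mem_of_not_mem hs' ha)]; exact hm' s hs'
        exact hcomm r hrI s hsI hne _ hmr _ hms
      rw [List.Perm.prod_eq' hperm hpair, List.prod_cons, Function.update_self, hmapeq]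

end Aux

/-- Let `G` be a finite non-abelian group with any internal direct decomposition
`G = G₁ × ⋯ × G_d` into nontrivial factors, let `R` be a set of representatives of the
connected components of the non-commuting graph on the greedy set `M`, and `J ⊆ R`.
Then the elements `x` with `C_x = ∏_{r ∈ J} N_r` are exactly those of the form
`x = z · ∏_{r ∈ R \ J} n_r` with `z ∈ Z(G)` and `n_r ∈ N_r` non-central; in
particular, for every collection of non-abelian direct factors there is a full
element. -/
theorem centComp_eq_iff_product_of_noncentral {G : Type*} [Group G] [Finite G]
    [DecidableEq G] (hG : ¬ ∀ a b : G, a * b = b * a)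
    {d : ℕ} (Gf : Fin d → Subgroup G)
    (hnormal : ∀ j, (Gf j).Normal) (hindep : iSupIndep Gf)
    (hsup : ⨆ j, Gf j = ⊤) (hnebot : ∀ j, Gf j ≠ ⊥)
    (R : Finset G) (hRM : (R : Set G) ⊆ greedyMset G)
    (hRdisj : ∀ r ∈ R, ∀ s ∈ R, r ≠ s → ¬ Relation.ReflTransGen (ncAdj G) r s)
    (hRfull : ∀ m ∈ greedyMset G, ∃ r ∈ R, Relation.ReflTransGen (ncAdj G) r m)
    (J : Finset G) (hJ : J ⊆ R) :
    (∀ x : G,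
      (centComp x = ⨆ r ∈ J, nonAbelianComponent G r) ↔
        (∃ z ∈ Subgroup.center G, ∃ n : G → G,
          (∀ r ∈ R \ J, n r ∈ nonAbelianComponent G r ∧ n r ∉ Subgroup.center G) ∧
          x = z * ((R \ J).toList.map n).prod)) ∧
    (∀ Jf : Finset (Fin d), (∀ j ∈ Jf, ¬ ∀ a b : Gf j, a * b = b * a) →
      ∃ x : G, ∀ r ∈ R,
        ((∃ a ∈ nonAbelianComponent G r, ¬ Commute x a) ↔
          ∃ j ∈ Jf, nonAbelianComponent G r ≤ Gf j ⊔ Subgroup.center G)) := by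
  classical
  have hRM' : ∀ r ∈ R, r ∈ greedyMset G := fun r hr => hRM (Finset.mem_coe.mpr hr)
  have hsupN : (⊤ : Subgroup G) ≤ ⨆ r ∈ R, nonAbelianComponent G r := by
    rw [← aux_closure_greedyMset_eq_top hG, Subgroup.closure_le]
    intro g hg
    obtain ⟨r, hr, hconn⟩ := hRfull g hg
    have hgN : g ∈ nonAbelianComponent G r := Subgroup.subset_closure ⟨hg, hconn⟩
    exact (le_iSup₂_of_le r hr le_rfl : nonAbelianComponent G r ≤ _) hgN
  have hcomm : ∀ r ∈ R, ∀ s ∈ R, r ≠ s → ∀ a ∈ nonAbelianComponent G r,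
      ∀ b ∈ nonAbelianComponent G s, Commute a b :=
    fun r hr s hs hrs => aux_commute_NN (hRdisj r hr s hs hrs)
  have hNle : ∀ r ∈ R, ∀ s ∈ R, r ≠ s →
      nonAbelianComponent G s ≤ Subgroup.centralizer (nonAbelianComponent G r : Set G) :=
    fun r hr s hs hrs => aux_N_le_centralizer_N (hRdisj r hr s hs hrs)
  have hselfN : ∀ r ∈ R, r ∈ nonAbelianComponent G r :=
    fun r hr => Subgroup.subset_closure (aux_mem_ncComponent_self (hRM' r hr))
  have hcent : ∀ y : G,
      (∀ r ∈ R, y ∈ Subgroup.centralizer (nonAbelianComponent G r : Set G)) →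
      y ∈ Subgroup.center G := by
    intro y h
    rw [Subgroup.mem_center_iff]
    intro g
    have hg : g ∈ (⨆ r ∈ R, nonAbelianComponent G r) := hsupN (Subgroup.mem_top g)
    have hle : (⨆ r ∈ R, nonAbelianComponent G r) ≤ Subgroup.centralizer {y} := by
      refine iSup₂_le fun r hr => ?_
      intro a ha
      rw [Subgroup.mem_centralizer_singleton_iff]
      exact Subgroup.mem_centralizer_iff.mp (h r hr) a ha
    exact Subgroup.mem_centralizer_singleton_iff.mp (hle hg)
  have hnotle : ∀ r ∈ R,
      ¬ (nonAbelianComponent G r ≤ ⨆ s ∈ R.erase r, nonAbelianComponent G s) := by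
    intro r hr hle
    have h1 : (⨆ s ∈ R.erase r, nonAbelianComponent G s) ≤
        Subgroup.centralizer (nonAbelianComponent G r : Set G) :=
      iSup₂_le fun s hs => hNle r hr s (Finset.mem_of_mem_erase hs)
        (Ne.symm (Finset.ne_of_mem_erase hs))
    have hrc : r ∈ Subgroup.centralizer (nonAbelianComponent G r : Set G) :=
      h1 (hle (hselfN r hr))
    have : r ∈ Subgroup.center G := by
      refine hcent r (fun s hs => ?_)
      by_cases hsr : s = r
      · subst hsr; exact hrc
      · exact hNle s hs r hr hsr (hselfN r hr)
    exact aux_noncentral (hRM' r hr) this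
  have hCC : ∀ x : G, centComp x =
      ⨆ r ∈ R, ⨆ (_ : ∀ a ∈ nonAbelianComponent G r, Commute x a),
        nonAbelianComponent G r := by
    intro x
    apply le_antisymm
    · rw [centComp]
      refine iSup₂_le fun g hg => ?_
      obtain ⟨hgM, hgP⟩ := hg
      obtain ⟨r, hrR, hconn⟩ := hRfull g hgM
      have hNg : nonAbelianComponent G g = nonAbelianComponent G r :=
        congrArg Subgroup.closure (aux_ncComponent_eq_of_conn hconn).symm
      rw [hNg] at hgP ⊢
      exact le_iSup₂_of_le r hrR (le_iSup_of_le hgP le_rfl)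
    · refine iSup₂_le fun r hr => iSup_le fun hP => ?_
      rw [centComp]
      exact le_iSup₂_of_le r (Set.mem_sep_iff.mpr ⟨hRM' r hr, hP⟩) le_rfl
  constructor
  · intro x
    constructor
    · -- forward direction
      intro hEq
      have hPiff : ∀ r ∈ R, (∀ a ∈ nonAbelianComponent G r, Commute x a) ↔ r ∈ J := by
        intro r hr
        constructor
        · intro hP
          by_contra hrJ
          refine hnotle r hr ?_
          calc nonAbelianComponent G r ≤ centComp x := by
                rw [hCC x]; exact le_iSup₂_of_le r hr (le_iSup_of_le hP le_rfl)
            _ = ⨆ s ∈ J, nonAbelianComponent G s := hEq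
            _ ≤ ⨆ s ∈ R.erase r, nonAbelianComponent G s :=
                iSup₂_le fun s hs => le_iSup₂_of_le s
                  (Finset.mem_erase.mpr ⟨fun e => hrJ (e ▸ hs), hJ hs⟩) le_rfl
        · intro hrJ
          by_contra hP
          refine hnotle r hr ?_
          calc nonAbelianComponent G r ≤ ⨆ s ∈ J, nonAbelianComponent G s :=
                le_iSup₂_of_le r hrJ le_rfl
            _ = centComp x := hEq.symm
            _ ≤ ⨆ s ∈ R.erase r, nonAbelianComponent G s := by
                rw [hCC x]
                refine iSup₂_le fun s hs => iSup_le fun hPs => ?_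
                refine le_iSup₂_of_le s (Finset.mem_erase.mpr ⟨?_, hs⟩) le_rfl
                rintro rfl; exact hP hPs
      obtain ⟨m, hm, hx⟩ := aux_exists_decomp R hcomm x (hsupN (Subgroup.mem_top x))
      have hmain : ∀ r ∈ R, x ∈ Subgroup.centralizer (nonAbelianComponent G r : Set G) →
          m r ∈ Subgroup.centralizer (nonAbelianComponent G r : Set G) := by
        intro r hr hxc
        refine aux_mem_of_map_prod_mem (Finset.nodup_toList R) (Finset.mem_toList.mpr hr)
          ?_ ?_
        · intro s hs hsr
          exact hNle r hr s (Finset.mem_toList.mp hs) (fun e => hsr e.symm)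
            (hm s (Finset.mem_toList.mp hs))
        · rw [← hx]; exact hxc
      have hmZ : ∀ r ∈ J, m r ∈ Subgroup.center G := by
        intro r hrJ
        have hr := hJ hrJ
        have hP := (hPiff r hr).2 hrJ
        have hmr := hmain r hr (aux_mem_centralizerN_iff.mpr hP)
        refine hcent (m r) (fun s hs => ?_)
        by_cases hsr : s = r
        · subst hsr; exact hmr
        · exact hNle s hs r hr hsr (hm r hr)
      have hmNZ : ∀ r ∈ R \ J, m r ∉ Subgroup.center G := by
        intro r hrRJ hmZr
        obtain ⟨hr, hrJ⟩ := Finset.mem_sdiff.mp hrRJ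
        have hP : ∀ a ∈ nonAbelianComponent G r, Commute x a := by
          refine aux_mem_centralizerN_iff.mp ?_
          rw [hx]
          refine Subgroup.list_prod_mem _ (fun y hy => ?_)
          obtain ⟨s, hs, rfl⟩ := List.mem_map.mp hy
          have hsR := Finset.mem_toList.mp hs
          by_cases hsr : s = r
          · subst hsr
            exact Subgroup.center_le_centralizer (nonAbelianComponent G s : Set G) hmZr
          · exact hNle r hr s hsR (fun e => hsr e.symm) (hm s hsR)
        exact hrJ ((hPiff r hr).1 hP)
      refine ⟨(J.toList.map m).prod, ?_, m, ?_, ?_⟩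
      · refine Subgroup.list_prod_mem _ (fun y hy => ?_)
        obtain ⟨s, hs, rfl⟩ := List.mem_map.mp hy
        exact hmZ s (Finset.mem_toList.mp hs)
      · intro r hrRJ
        exact ⟨hm r (Finset.mem_sdiff.mp hrRJ).1, hmNZ r hrRJ⟩
      · rw [hx]
        conv_lhs => rw [← Finset.union_sdiff_of_subset hJ]
        refine aux_prod_split (A := J) (B := R \ J) Finset.disjoint_sdiff ?_
        intro a ha b hb hab
        rw [Finset.union_sdiff_of_subset hJ] at ha hb
        exact hcomm a ha b hb hab _ (hm a ha) _ (hm b hb)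
    · -- backward direction
      rintro ⟨z, hz, n, hn, rfl⟩
      set x : G := z * ((R \ J).toList.map n).prod with hxdef
      have hPiff : ∀ r ∈ R, (∀ a ∈ nonAbelianComponent G r, Commute x a) ↔ r ∈ J := by
        intro r hr
        constructor
        · intro hP
          by_contra hrJ
          have hrRJ : r ∈ R \ J := Finset.mem_sdiff.mpr ⟨hr, hrJ⟩
          have hxc : x ∈ Subgroup.centralizer (nonAbelianComponent G r : Set G) :=
            aux_mem_centralizerN_iff.mpr hP
          have hp : ((R \ J).toList.map n).prod ∈
              Subgroup.centralizer (nonAbelianComponent G r : Set G) := by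
            have hrw : ((R \ J).toList.map n).prod = z⁻¹ * x := by
              rw [hxdef]; group
            rw [hrw]
            exact mul_mem (inv_mem (Subgroup.center_le_centralizer _ hz)) hxc
          have hnrC : n r ∈ Subgroup.centralizer (nonAbelianComponent G r : Set G) := by
            refine aux_mem_of_map_prod_mem (Finset.nodup_toList _)
              (Finset.mem_toList.mpr hrRJ) ?_ hp
            intro s hs hsr
            have hsRJ := Finset.mem_toList.mp hs
            have hsR := (Finset.mem_sdiff.mp hsRJ).1
            exact hNle r hr s hsR (fun e => hsr e.symm) (hn s hsRJ).1
          have : n r ∈ Subgroup.center G := by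
            refine hcent (n r) (fun s hs => ?_)
            by_cases hsr : s = r
            · subst hsr; exact hnrC
            · exact hNle s hs r hr hsr (hn r hrRJ).1
          exact (hn r hrRJ).2 this
        · intro hrJ
          refine aux_mem_centralizerN_iff.mp ?_
          refine mul_mem (Subgroup.center_le_centralizer _ hz) ?_
          refine Subgroup.list_prod_mem _ (fun y hy => ?_)
          obtain ⟨s, hs, rfl⟩ := List.mem_map.mp hy
          have hsRJ := Finset.mem_toList.mp hs
          obtain ⟨hsR, hsJ⟩ := Finset.mem_sdiff.mp hsRJ
          have hrs : r ≠ s := fun e => hsJ (e ▸ hrJ)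
          exact hNle r (hJ hrJ) s hsR hrs (hn s hsRJ).1
      rw [hCC x]
      apply le_antisymm
      · exact iSup₂_le fun r hr => iSup_le fun hP =>
          le_iSup₂_of_le r ((hPiff r hr).1 hP) le_rfl
      · exact iSup₂_le fun r hrJ => le_iSup₂_of_le r (hJ hrJ)
          (le_iSup_of_le ((hPiff r (hJ hrJ)).2 hrJ) le_rfl)
  · -- part 2
    intro Jf _
    set K : Finset G := R.filter
      (fun r => ∃ j ∈ Jf, nonAbelianComponent G r ≤ Gf j ⊔ Subgroup.center G) with hK
    have hKR : K ⊆ R := Finset.filter_subset _ _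
    refine ⟨((K.toList).map id).prod, ?_⟩
    intro r hr
    by_cases hrK : r ∈ K
    · refine iff_of_true ?_ ((Finset.mem_filter.mp hrK).2)
      by_contra hno
      push_neg at hno
      have hxc : ((K.toList).map id).prod ∈
          Subgroup.centralizer (nonAbelianComponent G r : Set G) :=
        aux_mem_centralizerN_iff.mpr hno
      have hrc : r ∈ Subgroup.centralizer (nonAbelianComponent G r : Set G) := by
        refine aux_mem_of_map_prod_mem (Finset.nodup_toList _)
          (Finset.mem_toList.mpr hrK) ?_ hxc
        intro s hs hsr
        have hsR := hKR (Finset.mem_toList.mp hs)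
        exact hNle r hr s hsR (fun e => hsr e.symm) (hselfN s hsR)
      have : r ∈ Subgroup.center G := by
        refine hcent r (fun s hs => ?_)
        by_cases hsr : s = r
        · subst hsr; exact hrc
        · exact hNle s hs r hr hsr (hselfN r hr)
      exact aux_noncentral (hRM' r hr) this
    · refine iff_of_false ?_ (fun h => hrK (Finset.mem_filter.mpr ⟨hr, h⟩))
      rintro ⟨a, ha, hna⟩
      refine hna ?_
      have hxc : ((K.toList).map id).prod ∈
          Subgroup.centralizer (nonAbelianComponent G r : Set G) := by
        refine Subgroup.list_prod_mem _ (fun y hy => ?_)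
        obtain ⟨s, hs, rfl⟩ := List.mem_map.mp hy
        have hsK := Finset.mem_toList.mp hs
        have hsR := hKR hsK
        have hsr : r ≠ s := fun e => hrK (e ▸ hsK)
        exact hNle r hr s hsR hsr (hselfN s hsR)
      exact aux_mem_centralizerN_iff.mp hxc a ha
end

section
/- Let f : A → B be a bijection of finite sets, and let P = {A₁,…,A_t} and Q = {B₁,…,B_t} be partitions of A and B respectively into parts all of the same size m. Then A can be partitioned as A = R₁ ⊎ ⋯ ⊎ R_m where each Rᵢ is a full system of representatives of A modulo P (one element from each Aⱼ), and each image f(Rᵢ) is a full system of representatives of B modulo Q. -/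
open Finset

lemma fiber_count {A : Type*} [DecidableEq A] {t : ℕ} (p : A → Fin t) (s : Finset A)
    {n : ℕ} (h : ∀ j, (s.filter fun a => p a = j).card = n) (S : Finset (Fin t)) :
    (s.filter fun a => p a ∈ S).card = S.card * n := by
  classical
  have he : (s.filter fun a => p a ∈ S) = S.biUnion (fun j => s.filter fun a => p a = j) := by
    ext a
    simp only [mem_filter, mem_biUnion]
    constructor
    · rintro ⟨ha, hm⟩; exact ⟨p a, hm, ha, rfl⟩
    · rintro ⟨j, hj, ha, hpj⟩; exact ⟨ha, hpj ▸ hj⟩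
  rw [he, Finset.card_biUnion]
  · simp [h, mul_comm]
  · intro x hx y hy hxy
    apply Finset.disjoint_left.mpr
    intro a hax hay
    simp only [mem_filter] at hax hay
    exact hxy (hax.2 ▸ hay.2 ▸ rfl)

lemma equip_aux {A : Type*} [Fintype A] [DecidableEq A] {t : ℕ} (pA pB : A → Fin t) :
    ∀ m : ℕ, ∀ s : Finset A,
      (∀ j, (s.filter fun a => pA a = j).card = m) →
      (∀ j, (s.filter fun a => pB a = j).card = m) →
      ∃ c : A → ℕ, (∀ a ∈ s, c a < m) ∧
        (∀ i < m, ∀ j, ∃! a, a ∈ s ∧ c a = i ∧ pA a = j) ∧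
        (∀ i < m, ∀ j, ∃! a, a ∈ s ∧ c a = i ∧ pB a = j) := by
  intro m
  induction m with
  | zero =>
    intro s hsA hsB
    have hs : s = ∅ := by
      by_contra h
      obtain ⟨a, ha⟩ := Finset.nonempty_iff_ne_empty.mpr h
      have h1 : a ∈ s.filter fun x => pA x = pA a := by simp [ha]
      have h2 := Finset.card_pos.mpr ⟨a, h1⟩
      rw [hsA (pA a)] at h2
      exact lt_irrefl 0 h2
    subst hs
    exact ⟨fun _ => 0, by simp, fun i hi => (Nat.not_lt_zero i hi).elim,
      fun i hi => (Nat.not_lt_zero i hi).elim⟩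
  | succ m ih =>
    intro s hsA hsB
    classical
    set T : Fin t → Finset (Fin t) := fun j => (s.filter fun a => pA a = j).image pB with hT
    have hall : ∀ S : Finset (Fin t), S.card ≤ (S.biUnion T).card := by
      intro S
      have hsub : (s.filter fun a => pA a ∈ S) ⊆ (s.filter fun a => pB a ∈ S.biUnion T) := by
        intro a ha
        simp only [mem_filter] at ha ⊢
        refine ⟨ha.1, Finset.mem_biUnion.mpr ⟨pA a, ha.2, ?_⟩⟩
        exact Finset.mem_image.mpr ⟨a, by simp [ha.1], rfl⟩
      have h1 := fiber_count pA s hsA S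
      have h2 := fiber_count pB s hsB (S.biUnion T)
      have := Finset.card_le_card hsub
      rw [h1, h2] at this
      exact Nat.le_of_mul_le_mul_right this (Nat.succ_pos m)
    obtain ⟨σ, hσinj, hσ⟩ := (Finset.all_card_le_biUnion_card_iff_exists_injective T).mp hall
    -- σ is a bijection
    have hσsurj : Function.Surjective σ := Finite.surjective_of_injective hσinj
    -- choose representatives
    have hrep : ∀ j, ∃ a, a ∈ s ∧ pA a = j ∧ pB a = σ j := by
      intro j
      obtain ⟨a, ha, hpb⟩ := Finset.mem_image.mp (hσ j)
      simp only [mem_filter] at ha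
      exact ⟨a, ha.1, ha.2, hpb⟩
    choose g hg_s hg_pA hg_pB using hrep
    have hginj : Function.Injective g := fun x y hxy => by
      rw [← hg_pA x, ← hg_pA y, hxy]
    set R : Finset A := Finset.univ.image g with hR
    have hmemR : ∀ a, a ∈ R ↔ ∃ j, g j = a := by
      intro a; simp [hR]
    -- the smaller set
    set s' : Finset A := s \ R with hs'
    have hs'A : ∀ j, (s'.filter fun a => pA a = j).card = m := by
      intro j
      have key : (s.filter fun a => pA a = j) = insert (g j) (s'.filter fun a => pA a = j) := by
        ext a
        simp only [mem_insert, mem_filter, hs', mem_sdiff]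
        constructor
        · rintro ⟨ha, hpa⟩
          by_cases hra : a ∈ R
          · obtain ⟨j', hj'⟩ := (hmemR a).mp hra
            left; rw [← hj']; congr 1; rw [← hpa, ← hj', hg_pA]
          · right; exact ⟨⟨ha, hra⟩, hpa⟩
        · rintro (rfl | ⟨⟨ha, _⟩, hpa⟩)
          · exact ⟨hg_s j, hg_pA j⟩
          · exact ⟨ha, hpa⟩
      have hnot : g j ∉ (s'.filter fun a => pA a = j) := by
        simp only [mem_filter, hs', mem_sdiff, not_and]
        rintro ⟨_, hgR⟩
        exact (hgR (Finset.mem_image_of_mem g (mem_univ j))).elim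
      have := hsA j
      rw [key, Finset.card_insert_of_notMem hnot] at this
      omega
    have hs'B : ∀ k, (s'.filter fun a => pB a = k).card = m := by
      intro k
      obtain ⟨j, rfl⟩ := hσsurj k
      have key : (s.filter fun a => pB a = σ j) = insert (g j) (s'.filter fun a => pB a = σ j) := by
        ext a
        simp only [mem_insert, mem_filter, hs', mem_sdiff]
        constructor
        · rintro ⟨ha, hpa⟩
          by_cases hra : a ∈ R
          · obtain ⟨j', hj'⟩ := (hmemR a).mp hra
            left; rw [← hj']; congr 1
            apply hσinj
            rw [← hpa, ← hj', hg_pB]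
          · right; exact ⟨⟨ha, hra⟩, hpa⟩
        · rintro (rfl | ⟨⟨ha, _⟩, hpa⟩)
          · exact ⟨hg_s j, hg_pB j⟩
          · exact ⟨ha, hpa⟩
      have hnot : g j ∉ (s'.filter fun a => pB a = σ j) := by
        simp only [mem_filter, hs', mem_sdiff, not_and]
        rintro ⟨_, hgR⟩
        exact (hgR (Finset.mem_image_of_mem g (mem_univ j))).elim
      have := hsB (σ j)
      rw [key, Finset.card_insert_of_notMem hnot] at this
      omega
    obtain ⟨c', hc'lt, hc'A, hc'B⟩ := ih s' hs'A hs'B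
    refine ⟨fun a => if a ∈ R then m else c' a, ?_, ?_, ?_⟩
    · intro a ha
      by_cases hra : a ∈ R
      · simp [hra]
      · have : a ∈ s' := by simp [hs', ha, hra]
        simp [hra]
        exact (hc'lt a this).le
    · intro i hi j
      rcases Nat.lt_succ_iff_lt_or_eq.mp hi with hi' | rfl
      · obtain ⟨a, ⟨has', hca, hpa⟩, huniq⟩ := hc'A i hi' j
        have haR : a ∉ R := (Finset.mem_sdiff.mp has').2
        refine ⟨a, ⟨(Finset.mem_sdiff.mp has').1, by simp [haR, hca], hpa⟩, ?_⟩
        rintro b ⟨hbs, hcb, hpb⟩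
        have hbR : b ∉ R := by
          intro hbR; simp only [if_pos hbR] at hcb; omega
        simp only [if_neg hbR] at hcb
        exact huniq b ⟨Finset.mem_sdiff.mpr ⟨hbs, hbR⟩, hcb, hpb⟩
      · refine ⟨g j, ⟨hg_s j, by simp only [if_pos ((hmemR (g j)).mpr ⟨j, rfl⟩)], hg_pA j⟩, ?_⟩
        rintro b ⟨hbs, hcb, hpb⟩
        by_cases hbR : b ∈ R
        · obtain ⟨j', rfl⟩ := (hmemR b).mp hbR
          congr 1; rw [← hpb, hg_pA]
        · simp only [if_neg hbR] at hcb
          have := hc'lt b (Finset.mem_sdiff.mpr ⟨hbs, hbR⟩)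
          omega
    · intro i hi k
      rcases Nat.lt_succ_iff_lt_or_eq.mp hi with hi' | rfl
      · obtain ⟨a, ⟨has', hca, hpa⟩, huniq⟩ := hc'B i hi' k
        have haR : a ∉ R := (Finset.mem_sdiff.mp has').2
        refine ⟨a, ⟨(Finset.mem_sdiff.mp has').1, by simp [haR, hca], hpa⟩, ?_⟩
        rintro b ⟨hbs, hcb, hpb⟩
        have hbR : b ∉ R := by
          intro hbR; simp only [if_pos hbR] at hcb; omega
        simp only [if_neg hbR] at hcb
        exact huniq b ⟨Finset.mem_sdiff.mpr ⟨hbs, hbR⟩, hcb, hpb⟩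
      · obtain ⟨j, rfl⟩ := hσsurj k
        refine ⟨g j, ⟨hg_s j, by simp only [if_pos ((hmemR (g j)).mpr ⟨j, rfl⟩)], hg_pB j⟩, ?_⟩
        rintro b ⟨hbs, hcb, hpb⟩
        by_cases hbR : b ∈ R
        · obtain ⟨j', rfl⟩ := (hmemR b).mp hbR
          congr 1; exact hσinj (by rw [← hpb, hg_pB])
        · simp only [if_neg hbR] at hcb
          have := hc'lt b (Finset.mem_sdiff.mpr ⟨hbs, hbR⟩)
          omega

/-- Let `f : A ≃ B` be a bijection of finite sets with equipartitions `pA : A → Fin t`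
and `pB : B → Fin t`, all parts of size `m`. Then `A` can be partitioned into `m`
classes (the fibers of some `c : A → Fin m`) such that each class is a full system of
representatives of the partition `pA`, and the image under `f` of each class is a full
system of representatives of the partition `pB`. -/
theorem equipartition_common_representatives {A B : Type*} [Fintype A] [Fintype B]
    [DecidableEq A] [DecidableEq B] (f : A ≃ B) {t m : ℕ}
    (pA : A → Fin t) (pB : B → Fin t)
    (hA : ∀ j : Fin t, (Finset.univ.filter fun a => pA a = j).card = m)
    (hB : ∀ j : Fin t, (Finset.univ.filter fun b => pB b = j).card = m) :
    ∃ c : A → Fin m,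
      (∀ (i : Fin m) (j : Fin t), ∃! a : A, c a = i ∧ pA a = j) ∧
      (∀ (i : Fin m) (j : Fin t), ∃! a : A, c a = i ∧ pB (f a) = j) := by
  classical
  have hB' : ∀ j, (Finset.univ.filter fun a => pB (f a) = j).card = m := by
    intro j
    rw [← hB j]
    apply Finset.card_bij (fun a _ => f a)
    · intro a ha; simpa using (Finset.mem_filter.mp ha).2
    · intro a _ b _ h; exact f.injective h
    · intro b hb
      exact ⟨f.symm b, by simpa using (Finset.mem_filter.mp hb).2, by simp⟩
  obtain ⟨c, hlt, hcA, hcB⟩ := equip_aux pA (fun a => pB (f a)) m Finset.univ hA hB'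
  refine ⟨fun a => ⟨c a, hlt a (Finset.mem_univ a)⟩, ?_, ?_⟩
  · intro i j
    obtain ⟨a, ⟨_, hca, hpa⟩, hu⟩ := hcA i.val i.isLt j
    refine ⟨a, ⟨Fin.ext hca, hpa⟩, ?_⟩
    rintro b ⟨hcb, hpb⟩
    exact hu b ⟨Finset.mem_univ b, congrArg Fin.val hcb, hpb⟩
  · intro i j
    obtain ⟨a, ⟨_, hca, hpa⟩, hu⟩ := hcB i.val i.isLt j
    refine ⟨a, ⟨Fin.ext hca, hpa⟩, ?_⟩
    rintro b ⟨hcb, hpb⟩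
    exact hu b ⟨Finset.mem_univ b, congrArg Fin.val hcb, hpb⟩
end
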